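/- arXiv:2012.13035 — 5 statements merged into one kernel-verified Lean document; each statement's English description precedes it below -/
import Mathlib

section
/- Let (X,d,μ) be a space of homogeneous type with μ({x}) = 0 for all x, and β ∈ (0,∞). Then there exists C > 0 such that for all x ∈ X and R ∈ (0,∞): ∫_{{y : 0 < d(x,y) ≤ R}} (d(x,y)/R)^β / V(x,y) dμ(y) ≤ C, and ∫_{{y : d(x,y) ≥ R}} (R/d(x,y))^β / V(x,y) dμ(y) ≤ C. -/
open MeasureTheory
open scoped ENNReal

/-- Quasi-metric ball. -/
def qball {X : Type*} (d : X → X → ℝ) (x : X) (r : ℝ) : Set X := {y | d x y < r}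

lemma aux_setLIntegral_le {X : Type*} [MeasurableSpace X] (μ : Measure X) {s : Set X}
    {f : X → ℝ≥0∞} {c : ℝ≥0∞} (h : ∀ y ∈ s, f y ≤ c) :
    ∫⁻ y in s, f y ∂μ ≤ c * μ s := by
  rw [MeasureTheory.lintegral]
  refine iSup₂_le fun g hg => ?_
  have hset : MeasurableSet {y | c < g y} := measurableSet_lt measurable_const g.measurable
  have hnull : (μ.restrict s) {y | c < g y} = 0 := by
    rw [Measure.restrict_apply hset]
    have he : {y | c < g y} ∩ s = ∅ := by
      ext y
      simp only [Set.mem_inter_iff, Set.mem_setOf_eq, Set.mem_empty_iff_false, iff_false,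
        not_and]
      intro hc hys
      exact absurd ((hg y).trans (h y hys)) (not_le.2 hc)
    rw [he, measure_empty]
  have hae : ∀ᵐ y ∂(μ.restrict s), g y ≤ c := by
    rw [ae_iff]
    simpa [not_le] using hnull
  calc g.lintegral (μ.restrict s) = ∫⁻ y, g y ∂(μ.restrict s) :=
        (g.lintegral_eq_lintegral _).symm
    _ ≤ ∫⁻ _, c ∂(μ.restrict s) := lintegral_mono_ae hae
    _ = c * μ s := by rw [lintegral_const, Measure.restrict_apply_univ]

lemma aux_lint_le_tsum {X : Type*} [MeasurableSpace X] (μ : Measure X) (f : X → ℝ≥0∞)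
    (s : ℕ → Set X) (T : Set X) (hcov : T ⊆ ⋃ k, s k) (c : ℕ → ℝ≥0∞)
    (hb : ∀ k, ∀ y ∈ s k, f y ≤ c k) :
    ∫⁻ y in T, f y ∂μ ≤ ∑' k, c k * μ (s k) := by
  calc ∫⁻ y in T, f y ∂μ ≤ ∫⁻ y in ⋃ k, s k, f y ∂μ := lintegral_mono_set hcov
    _ ≤ ∫⁻ y, f y ∂(Measure.sum fun k => μ.restrict (s k)) :=
        lintegral_mono' Measure.restrict_iUnion_le le_rfl
    _ = ∑' k, ∫⁻ y in s k, f y ∂μ := lintegral_sum_measure f _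
    _ ≤ ∑' k, c k * μ (s k) := ENNReal.tsum_le_tsum fun k => aux_setLIntegral_le μ (hb k)

lemma aux_div_mul_le {a m b K : ℝ≥0∞} (h : b ≤ K * m) : a / m * b ≤ a * K := by
  rcases eq_or_ne m 0 with rfl | hm0
  · have hb : b = 0 := le_antisymm (by simpa using h) bot_le
    simp [hb]
  rcases eq_or_ne m ∞ with rfl | hmtop
  · simp [ENNReal.div_top]
  calc a / m * b ≤ a / m * (K * m) := mul_le_mul_right h _
    _ = a * K * (m⁻¹ * m) := by rw [div_eq_mul_inv]; ring
    _ = a * K := by rw [ENNReal.inv_mul_cancel hm0 hmtop, mul_one]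

lemma aux_pow_eq (β : ℝ) (k : ℕ) : ((2:ℝ)⁻¹ ^ k) ^ β = ((2:ℝ)⁻¹ ^ β) ^ k := by
  rw [← Real.rpow_natCast ((2:ℝ)⁻¹) k, ← Real.rpow_natCast ((2:ℝ)⁻¹ ^ β) k,
    ← Real.rpow_mul (by norm_num), ← Real.rpow_mul (by norm_num), mul_comm]

open scoped Classical in
/-- On a space of homogeneous type with `μ({x}) = 0` for all `x`, and `β > 0`, one has uniform
bounds `∫_{0<d(x,y)≤R} (d(x,y)/R)^β / V(x,y) dμ(y) ≤ C` and
`∫_{d(x,y)≥R} (R/d(x,y))^β / V(x,y) dμ(y) ≤ C` (integrands interpreted as `0` where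
`V(x,y) = 0`). -/
theorem stmt_4 {X : Type*} [MeasurableSpace X]
    (d : X → X → ℝ) (A₀ : ℝ) (hA₀ : 1 ≤ A₀)
    (hd_nonneg : ∀ x y, 0 ≤ d x y)
    (hd_symm : ∀ x y, d x y = d y x)
    (hd_eq : ∀ x y, d x y = 0 ↔ x = y)
    (hd_tri : ∀ x y z, d x z ≤ A₀ * (d x y + d y z))
    (μ : Measure X) (Cμ : ℝ) (hCμ : 1 ≤ Cμ)
    (hdoub : ∀ x r, μ (qball d x (2 * r)) ≤ ENNReal.ofReal Cμ * μ (qball d x r))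
    (hatom : ∀ x : X, μ {x} = 0)
    (β : ℝ) (hβ : 0 < β) :
    ∃ C : ℝ, 0 < C ∧ ∀ (x : X) (R : ℝ), 0 < R →
      (∫⁻ y in {y | 0 < d x y ∧ d x y ≤ R},
          (if μ (qball d x (d x y)) = 0 then 0
            else ENNReal.ofReal ((d x y / R) ^ β) / μ (qball d x (d x y))) ∂μ
        ≤ ENNReal.ofReal C) ∧
      (∫⁻ y in {y | R ≤ d x y},
          (if μ (qball d x (d x y)) = 0 then 0
            else ENNReal.ofReal ((R / d x y) ^ β) / μ (qball d x (d x y))) ∂μ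
        ≤ ENNReal.ofReal C) := by
  set q : ℝ := (2:ℝ)⁻¹ ^ β with hq_def
  have hq0 : 0 < q := Real.rpow_pos_of_pos (by norm_num) β
  have hq1 : q < 1 := Real.rpow_lt_one (by norm_num) (by norm_num) hβ
  have h1q : 0 < 1 - q := sub_pos.2 hq1
  have hCμ0 : 0 < Cμ := lt_of_lt_of_le one_pos hCμ
  set K : ℝ≥0∞ := ENNReal.ofReal Cμ * ENNReal.ofReal Cμ with hK_def
  refine ⟨Cμ * Cμ * (1 - q)⁻¹, by positivity, fun x R hR => ?_⟩
  have hsum : ∑' k : ℕ, ENNReal.ofReal (q ^ k) * K = ENNReal.ofReal (Cμ * Cμ * (1 - q)⁻¹) := by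
    rw [ENNReal.tsum_mul_right]
    have h1 : ∑' k : ℕ, ENNReal.ofReal (q ^ k) = ENNReal.ofReal ((1 - q)⁻¹) := by
      rw [tsum_congr fun k => ENNReal.ofReal_pow hq0.le k, ENNReal.tsum_geometric,
        ENNReal.ofReal_inv_of_pos h1q, ENNReal.ofReal_sub 1 hq0.le, ENNReal.ofReal_one]
    rw [h1, hK_def, ← ENNReal.ofReal_mul hCμ0.le,
      ← ENNReal.ofReal_mul (by positivity : (0:ℝ) ≤ (1 - q)⁻¹)]
    congr 1
    ring
  constructor
  · -- first integral
    set s1 : ℕ → Set X := fun k =>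
      {y | R * (2:ℝ) ^ (-(k:ℤ) - 1) < d x y ∧ d x y ≤ R * (2:ℝ) ^ (-(k:ℤ))} with hs1
    set c1 : ℕ → ℝ≥0∞ := fun k =>
      ENNReal.ofReal (q ^ k) / μ (qball d x (R * (2:ℝ) ^ (-(k:ℤ) - 1))) with hc1
    have hcov : {y | 0 < d x y ∧ d x y ≤ R} ⊆ ⋃ k, s1 k := by
      rintro y ⟨hd0, hdR⟩
      have hu : 0 < R / d x y := div_pos hR hd0
      obtain ⟨n, hn1, hn2⟩ := exists_mem_Ico_zpow hu one_lt_two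
      have hn0 : 0 ≤ n := by
        by_contra hneg
        push_neg at hneg
        have hle : (2:ℝ) ^ (n + 1) ≤ (2:ℝ) ^ (0:ℤ) :=
          zpow_le_zpow_right₀ one_le_two (by omega)
        have : 1 ≤ R / d x y := (one_le_div hd0).2 hdR
        simp only [zpow_zero] at hle
        linarith
      refine Set.mem_iUnion.2 ⟨n.toNat, ?_, ?_⟩
      · have htn : (n.toNat : ℤ) = n := Int.toNat_of_nonneg hn0
        have heq : -(n.toNat : ℤ) - 1 = -(n + 1) := by rw [htn]; ring
        rw [heq, zpow_neg]
        have h2 : R < 2 ^ (n + 1) * d x y := (div_lt_iff₀ hd0).1 hn2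
        have hp : (0:ℝ) < 2 ^ (n + 1) := zpow_pos two_pos _
        rw [mul_comm R, inv_mul_eq_div, div_lt_iff₀ hp] -- goal? adjust below
        linarith [h2]
      · have htn : (n.toNat : ℤ) = n := Int.toNat_of_nonneg hn0
        rw [htn, zpow_neg]
        have h2 : 2 ^ n * d x y ≤ R := (le_div_iff₀ hd0).1 hn1
        have hp : (0:ℝ) < (2:ℝ) ^ n := zpow_pos two_pos _
        rw [mul_comm R, inv_mul_eq_div, le_div_iff₀ hp]
        linarith
    have hb : ∀ k, ∀ y ∈ s1 k,
        (if μ (qball d x (d x y)) = 0 then 0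
          else ENNReal.ofReal ((d x y / R) ^ β) / μ (qball d x (d x y))) ≤ c1 k := by
      intro k y hy
      obtain ⟨hlo, hhi⟩ := hy
      by_cases h0 : μ (qball d x (d x y)) = 0
      · simp [h0]
      rw [if_neg h0]
      refine ENNReal.div_le_div (ENNReal.ofReal_le_ofReal ?_) (measure_mono ?_)
      · have h1 : d x y / R ≤ (2:ℝ)⁻¹ ^ k := by
          have : (2:ℝ) ^ (-(k:ℤ)) = (2:ℝ)⁻¹ ^ k := by
            rw [zpow_neg, zpow_natCast, inv_pow]
          rw [← this, div_le_iff₀ hR]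
          linarith [hhi]
        calc (d x y / R) ^ β ≤ ((2:ℝ)⁻¹ ^ k) ^ β :=
              Real.rpow_le_rpow (div_nonneg (hd_nonneg x y) hR.le) h1 hβ.le
          _ = q ^ k := aux_pow_eq β k
      · exact fun z hz => lt_trans hz hlo
    refine le_trans (aux_lint_le_tsum μ _ s1 _ hcov c1 hb) ?_
    rw [← hsum]
    refine ENNReal.tsum_le_tsum fun k => ?_
    set w : ℝ := (2:ℝ) ^ (-(k:ℤ) - 1) with hw_def
    have hw : 0 < w := zpow_pos two_pos _
    have hmeas : μ (s1 k) ≤ K * μ (qball d x (R * w)) := by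
      have hsub : s1 k ⊆ qball d x (2 * (2 * (R * w))) := by
        rintro y ⟨_, hhi⟩
        have h2 : (2:ℝ) ^ (-(k:ℤ)) = 2 * w := by
          rw [hw_def, show -(k:ℤ) = (-(k:ℤ) - 1) + 1 by ring, zpow_add_one₀ (two_ne_zero)]
          ring
        show d x y < 2 * (2 * (R * w))
        rw [h2] at hhi
        nlinarith [mul_pos hR hw]
      calc μ (s1 k) ≤ μ (qball d x (2 * (2 * (R * w)))) := measure_mono hsub
        _ ≤ ENNReal.ofReal Cμ * μ (qball d x (2 * (R * w))) := hdoub x _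
        _ ≤ ENNReal.ofReal Cμ * (ENNReal.ofReal Cμ * μ (qball d x (R * w))) :=
            mul_le_mul_right (hdoub x _) _
        _ = K * μ (qball d x (R * w)) := by rw [hK_def, mul_assoc]
    exact aux_div_mul_le hmeas
  · -- second integral
    set s2 : ℕ → Set X := fun k =>
      {y | R * (2:ℝ) ^ k ≤ d x y ∧ d x y < R * (2:ℝ) ^ (k + 1)} with hs2
    set c2 : ℕ → ℝ≥0∞ := fun k =>
      ENNReal.ofReal (q ^ k) / μ (qball d x (R * (2:ℝ) ^ k)) with hc2
    have hcov : {y | R ≤ d x y} ⊆ ⋃ k, s2 k := by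
      intro y hy
      have hy : R ≤ d x y := hy
      have hd0 : 0 < d x y := lt_of_lt_of_le hR hy
      have hu : 0 < d x y / R := div_pos hd0 hR
      obtain ⟨n, hn1, hn2⟩ := exists_mem_Ico_zpow hu one_lt_two
      have hn0 : 0 ≤ n := by
        by_contra hneg
        push_neg at hneg
        have hle : (2:ℝ) ^ (n + 1) ≤ (2:ℝ) ^ (0:ℤ) :=
          zpow_le_zpow_right₀ one_le_two (by omega)
        have h1u : 1 ≤ d x y / R := (one_le_div hR).2 hy
        simp only [zpow_zero] at hle
        linarith
      have htn : (n.toNat : ℤ) = n := Int.toNat_of_nonneg hn0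
      refine Set.mem_iUnion.2 ⟨n.toNat, ?_, ?_⟩
      · have : (2:ℝ) ^ (n.toNat : ℕ) = (2:ℝ) ^ n := by rw [← zpow_natCast, htn]
        rw [this]
        have h2 : 2 ^ n * R ≤ d x y := (le_div_iff₀ hR).1 hn1
        linarith
      · have : (2:ℝ) ^ ((n.toNat : ℕ) + 1) = (2:ℝ) ^ (n + 1) := by
          rw [← zpow_natCast]
          push_cast [htn]
          rfl
        rw [this]
        have h2 : d x y < 2 ^ (n + 1) * R := (div_lt_iff₀ hR).1 hn2
        linarith
    have hb : ∀ k, ∀ y ∈ s2 k,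
        (if μ (qball d x (d x y)) = 0 then 0
          else ENNReal.ofReal ((R / d x y) ^ β) / μ (qball d x (d x y))) ≤ c2 k := by
      intro k y hy
      obtain ⟨hlo, hhi⟩ := hy
      have hd0 : 0 < d x y := lt_of_lt_of_le (by positivity) hlo
      by_cases h0 : μ (qball d x (d x y)) = 0
      · simp [h0]
      rw [if_neg h0]
      refine ENNReal.div_le_div (ENNReal.ofReal_le_ofReal ?_) (measure_mono ?_)
      · have h1 : R / d x y ≤ (2:ℝ)⁻¹ ^ k := by
          rw [inv_pow, ← one_div, div_le_div_iff₀ hd0 (pow_pos two_pos k)]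
          linarith
        calc (R / d x y) ^ β ≤ ((2:ℝ)⁻¹ ^ k) ^ β :=
              Real.rpow_le_rpow (div_nonneg hR.le hd0.le) h1 hβ.le
          _ = q ^ k := aux_pow_eq β k
      · exact fun z hz => lt_of_lt_of_le hz hlo
    refine le_trans (aux_lint_le_tsum μ _ s2 _ hcov c2 hb) ?_
    rw [← hsum]
    refine ENNReal.tsum_le_tsum fun k => ?_
    have hmeas : μ (s2 k) ≤ K * μ (qball d x (R * (2:ℝ) ^ k)) := by
      have hsub : s2 k ⊆ qball d x (2 * (R * (2:ℝ) ^ k)) := by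
        rintro y ⟨_, hhi⟩
        show d x y < 2 * (R * (2:ℝ) ^ k)
        rw [pow_succ] at hhi
        linarith
      calc μ (s2 k) ≤ μ (qball d x (2 * (R * (2:ℝ) ^ k))) := measure_mono hsub
        _ ≤ ENNReal.ofReal Cμ * μ (qball d x (R * (2:ℝ) ^ k)) := hdoub x _
        _ ≤ K * μ (qball d x (R * (2:ℝ) ^ k)) := by
            refine mul_le_mul_left ?_ _
            rw [hK_def]
            exact le_mul_of_one_le_left zero_le (ENNReal.one_le_ofReal.2 hCμ)
    exact aux_div_mul_le hmeas
end

section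
/- (Khinchin-type inequality) There exists a universal constant C > 0 such that for every n ∈ ℕ and all complex numbers a₁,…,a_n, (∑_{j=1}^n |a_j|²)^{1/2} ≤ C · 2^{-n} ∑_{ε ∈ {−1,1}^n} |ε₁ a₁ + ⋯ + ε_n a_n|. -/
lemma khin_normsq_eq (z : ℂ) : ‖z‖^2 = z.re^2 + z.im^2 := by
  rw [Complex.sq_norm, Complex.normSq_apply]; ring

lemma khin_pair2 (z w : ℂ) : ‖z + w‖^2 + ‖z - w‖^2 = 2*‖z‖^2 + 2*‖w‖^2 := by
  simp only [khin_normsq_eq, Complex.add_re, Complex.add_im, Complex.sub_re, Complex.sub_im]; ring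

lemma khin_pair4 (z w : ℂ) : ‖z + w‖^4 + ‖z - w‖^4 ≤ 2*‖z‖^4 + 12*‖z‖^2*‖w‖^2 + 2*‖w‖^4 := by
  have h1 : ‖z + w‖^4 = (‖z + w‖^2)^2 := by ring
  have h2 : ‖z - w‖^4 = (‖z - w‖^2)^2 := by ring
  have h3 : ‖z‖^4 = (‖z‖^2)^2 := by ring
  have h4 : ‖w‖^4 = (‖w‖^2)^2 := by ring
  rw [h1, h2, h3, h4]
  simp only [khin_normsq_eq, Complex.add_re, Complex.add_im, Complex.sub_re, Complex.sub_im]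
  nlinarith [sq_nonneg (z.re*w.im - z.im*w.re), sq_nonneg (z.re*w.re + z.im*w.im)]

lemma khin_split_sum (n : ℕ) (f : (Fin (n+1) → Bool) → ℝ) :
    ∑ ε : Fin (n+1) → Bool, f ε
      = ∑ ε : Fin n → Bool, (f (Fin.cons true ε) + f (Fin.cons false ε)) := by
  rw [← (Fin.consEquiv (fun _ : Fin (n+1) => Bool)).sum_comp f, Fintype.sum_prod_type_right]
  refine Finset.sum_congr rfl fun ε _ => ?_
  rw [Fintype.sum_bool]
  rfl

lemma khin_cons_S (n : ℕ) (a : Fin (n+1) → ℂ) (b : Bool) (ε : Fin n → Bool) :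
    ∑ j : Fin (n+1), (if (Fin.cons b ε : Fin (n+1) → Bool) j then (1:ℂ) else -1) * a j
      = (if b then (1:ℂ) else -1) * a 0
        + ∑ j : Fin n, (if ε j then (1:ℂ) else -1) * a j.succ := by
  rw [Fin.sum_univ_succ]; simp

lemma khin_moment2 : ∀ (n : ℕ) (a : Fin n → ℂ),
    ∑ ε : Fin n → Bool, ‖∑ j, (if ε j then (1:ℂ) else -1) * a j‖^2
      = 2^n * ∑ j, ‖a j‖^2 := by
  intro n
  induction n with
  | zero => intro a; simp
  | succ n ih =>
    intro a
    rw [khin_split_sum n (fun ε => ‖∑ j, (if ε j then (1:ℂ) else -1) * a j‖^2)]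
    have key : ∀ ε : Fin n → Bool,
        ‖∑ j, (if (Fin.cons true ε : Fin (n+1) → Bool) j then (1:ℂ) else -1) * a j‖^2
        + ‖∑ j, (if (Fin.cons false ε : Fin (n+1) → Bool) j then (1:ℂ) else -1) * a j‖^2
        = 2*‖∑ j : Fin n, (if ε j then (1:ℂ) else -1) * a j.succ‖^2 + 2*‖a 0‖^2 := by
      intro ε
      rw [khin_cons_S, khin_cons_S]
      have e1 : (if true then (1:ℂ) else -1) * a 0
          + ∑ j : Fin n, (if ε j then (1:ℂ) else -1) * a j.succ
          = (∑ j : Fin n, (if ε j then (1:ℂ) else -1) * a j.succ) + a 0 := by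
        simp; ring
      have e2 : (if false then (1:ℂ) else -1) * a 0
          + ∑ j : Fin n, (if ε j then (1:ℂ) else -1) * a j.succ
          = (∑ j : Fin n, (if ε j then (1:ℂ) else -1) * a j.succ) - a 0 := by
        simp; ring
      rw [e1, e2, khin_pair2]
    simp only [key]
    rw [Finset.sum_add_distrib, ← Finset.mul_sum, ih (fun j => a j.succ), Finset.sum_const]
    have hcard : (Finset.univ : Finset (Fin n → Bool)).card = 2^n := by
      simp [Fintype.card_fun]
    rw [hcard, Fin.sum_univ_succ (fun j => ‖a j‖^2), nsmul_eq_mul]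
    push_cast
    ring

lemma khin_moment4 : ∀ (n : ℕ) (a : Fin n → ℂ),
    ∑ ε : Fin n → Bool, ‖∑ j, (if ε j then (1:ℂ) else -1) * a j‖^4
      ≤ 3 * 2^n * (∑ j, ‖a j‖^2)^2 := by
  intro n
  induction n with
  | zero => intro a; simp
  | succ n ih =>
    intro a
    rw [khin_split_sum n (fun ε => ‖∑ j, (if ε j then (1:ℂ) else -1) * a j‖^4)]
    have key : ∀ ε : Fin n → Bool,
        ‖∑ j, (if (Fin.cons true ε : Fin (n+1) → Bool) j then (1:ℂ) else -1) * a j‖^4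
        + ‖∑ j, (if (Fin.cons false ε : Fin (n+1) → Bool) j then (1:ℂ) else -1) * a j‖^4
        ≤ 2*‖∑ j : Fin n, (if ε j then (1:ℂ) else -1) * a j.succ‖^4
          + 12*‖∑ j : Fin n, (if ε j then (1:ℂ) else -1) * a j.succ‖^2*‖a 0‖^2
          + 2*‖a 0‖^4 := by
      intro ε
      rw [khin_cons_S, khin_cons_S]
      have e1 : (if true then (1:ℂ) else -1) * a 0
          + ∑ j : Fin n, (if ε j then (1:ℂ) else -1) * a j.succ
          = (∑ j : Fin n, (if ε j then (1:ℂ) else -1) * a j.succ) + a 0 := by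
        simp; ring
      have e2 : (if false then (1:ℂ) else -1) * a 0
          + ∑ j : Fin n, (if ε j then (1:ℂ) else -1) * a j.succ
          = (∑ j : Fin n, (if ε j then (1:ℂ) else -1) * a j.succ) - a 0 := by
        simp; ring
      rw [e1, e2]
      exact khin_pair4 _ _
    refine le_trans (Finset.sum_le_sum fun ε _ => key ε) ?_
    rw [Finset.sum_add_distrib, Finset.sum_add_distrib, ← Finset.mul_sum, Finset.sum_const]
    have hcard : (Finset.univ : Finset (Fin n → Bool)).card = 2^n := by
      simp [Fintype.card_fun]
    rw [hcard]
    have h12 : ∑ ε : Fin n → Bool,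
        12*‖∑ j : Fin n, (if ε j then (1:ℂ) else -1) * a j.succ‖^2*‖a 0‖^2
        = 12*‖a 0‖^2 * (2^n * ∑ j : Fin n, ‖a j.succ‖^2) := by
      rw [← khin_moment2 n (fun j => a j.succ), Finset.mul_sum]
      exact Finset.sum_congr rfl fun ε _ => by ring
    rw [h12]
    have h4 := ih (fun j => a j.succ)
    rw [Fin.sum_univ_succ (fun j => ‖a j‖^2), nsmul_eq_mul]
    have hp : (0:ℝ) < 2^n := by positivity
    have ha0 : (0:ℝ) ≤ ‖a 0‖^2 := by positivity
    have hA' : (0:ℝ) ≤ ∑ j : Fin n, ‖a j.succ‖^2 :=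
      Finset.sum_nonneg fun j _ => by positivity
    rw [show ((2:ℝ))^(n+1) = 2^n * 2 from pow_succ 2 n]
    push_cast
    nlinarith [h4, mul_nonneg hp.le (mul_nonneg ha0 ha0)]

/-- Khinchin-type inequality: there is a universal `C > 0` such that for all `n` and all complex
`a₁,…,a_n`, `(∑_j |a_j|²)^{1/2} ≤ C 2^{-n} ∑_{ε ∈ {−1,1}^n} |ε₁a₁ + ⋯ + ε_n a_n|`. -/
theorem stmt_8 :
    ∃ C : ℝ, 0 < C ∧ ∀ (n : ℕ) (a : Fin n → ℂ),
      Real.sqrt (∑ j, ‖a j‖ ^ 2) ≤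
        C * 2 ^ (-(n : ℝ)) *
          ∑ ε : Fin n → Bool, ‖∑ j, (if ε j then (1 : ℂ) else -1) * a j‖ := by
  refine ⟨Real.sqrt 3, Real.sqrt_pos.2 (by norm_num), fun n a => ?_⟩
  set A : ℝ := ∑ j, ‖a j‖ ^ 2 with hA
  set S : (Fin n → Bool) → ℂ := fun ε => ∑ j, (if ε j then (1 : ℂ) else -1) * a j with hS
  set T1 : ℝ := ∑ ε : Fin n → Bool, ‖S ε‖ with hT1
  have hrw : (2:ℝ) ^ (-(n:ℝ)) = ((2:ℝ)^n)⁻¹ := by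
    rw [Real.rpow_neg (by norm_num : (0:ℝ) ≤ 2), Real.rpow_natCast]
  rw [hrw]
  have hAnn : 0 ≤ A := Finset.sum_nonneg fun j _ => by positivity
  have hT1nn : 0 ≤ T1 := Finset.sum_nonneg fun ε _ => norm_nonneg _
  have h2n : (0:ℝ) < 2^n := by positivity
  rcases eq_or_lt_of_le hAnn with hA0 | hApos
  · rw [← hA0, Real.sqrt_zero]
    positivity
  · -- moments
    have hm2 : ∑ ε : Fin n → Bool, ‖S ε‖^2 = 2^n * A := khin_moment2 n a
    have hm4 : ∑ ε : Fin n → Bool, ‖S ε‖^4 ≤ 3 * 2^n * A^2 := khin_moment4 n a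
    set T2 : ℝ := ∑ ε : Fin n → Bool, ‖S ε‖^2 with hT2
    set T3 : ℝ := ∑ ε : Fin n → Bool, ‖S ε‖^3 with hT3
    set T4 : ℝ := ∑ ε : Fin n → Bool, ‖S ε‖^4 with hT4
    have hT3nn : 0 ≤ T3 := Finset.sum_nonneg fun ε _ => by positivity
    have hT4nn : 0 ≤ T4 := Finset.sum_nonneg fun ε _ => by positivity
    -- Cauchy–Schwarz twice
    have hcs1 : T2^2 ≤ T1 * T3 := by
      have h := Finset.sum_mul_sq_le_sq_mul_sq Finset.univ
        (fun ε : Fin n → Bool => Real.sqrt ‖S ε‖)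
        (fun ε : Fin n → Bool => Real.sqrt ‖S ε‖ * ‖S ε‖)
      have e1 : ∀ ε : Fin n → Bool,
          Real.sqrt ‖S ε‖ * (Real.sqrt ‖S ε‖ * ‖S ε‖) = ‖S ε‖^2 := fun ε => by
        have : Real.sqrt ‖S ε‖ * Real.sqrt ‖S ε‖ = ‖S ε‖ :=
          Real.mul_self_sqrt (norm_nonneg _)
        nlinarith [this]
      have e2 : ∀ ε : Fin n → Bool, (Real.sqrt ‖S ε‖)^2 = ‖S ε‖ := fun ε =>
        Real.sq_sqrt (norm_nonneg _)
      have e3 : ∀ ε : Fin n → Bool, (Real.sqrt ‖S ε‖ * ‖S ε‖)^2 = ‖S ε‖^3 := fun ε => by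
        rw [mul_pow, e2]; ring
      simp only [e1, e2, e3] at h
      exact h
    have hcs2 : T3^2 ≤ T2 * T4 := by
      have h := Finset.sum_mul_sq_le_sq_mul_sq Finset.univ
        (fun ε : Fin n → Bool => ‖S ε‖)
        (fun ε : Fin n → Bool => ‖S ε‖^2)
      have e1 : ∀ ε : Fin n → Bool, ‖S ε‖ * ‖S ε‖^2 = ‖S ε‖^3 := fun ε => by ring
      have e2 : ∀ ε : Fin n → Bool, (‖S ε‖^2)^2 = ‖S ε‖^4 := fun ε => by ring
      simp only [e1, e2] at h
      exact h
    -- combine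
    have h1 : T2^4 ≤ T1^2 * T3^2 := by nlinarith [hcs1, sq_nonneg T2, mul_nonneg hT1nn hT3nn]
    have h2 : T2^4 ≤ T1^2 * (T2 * T4) :=
      h1.trans (mul_le_mul_of_nonneg_left hcs2 (by positivity))
    have h3 : T2^4 ≤ T1^2 * T2 * (3 * 2^n * A^2) := by
      have hT2nn : 0 ≤ T2 := by rw [hm2]; positivity
      nlinarith [h2, mul_nonneg (sq_nonneg T1) hT2nn, hm4]
    rw [hm2] at h3
    have key : 2^n * 2^n * A ≤ 3 * T1^2 := by
      have h5 : (2^n * 2^n * A) * (2^n * 2^n * A^3) ≤ (3 * T1^2) * (2^n * 2^n * A^3) := by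
        nlinarith [h3]
      exact le_of_mul_le_mul_right h5 (by positivity)
    have hs3 : Real.sqrt 3 ^ 2 = 3 := Real.sq_sqrt (by norm_num)
    have hinv : ((2:ℝ)^n)⁻¹ * (2^n) = 1 := inv_mul_cancel₀ h2n.ne'
    have hA2 : A ≤ (Real.sqrt 3 * ((2:ℝ)^n)⁻¹ * T1)^2 := by
      have e : A = (((2:ℝ)^n)⁻¹ * ((2:ℝ)^n)⁻¹) * (2^n * 2^n * A) := by
        field_simp
      calc A = (((2:ℝ)^n)⁻¹ * ((2:ℝ)^n)⁻¹) * (2^n * 2^n * A) := e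
        _ ≤ (((2:ℝ)^n)⁻¹ * ((2:ℝ)^n)⁻¹) * (3 * T1^2) :=
            mul_le_mul_of_nonneg_left key (by positivity)
        _ = (Real.sqrt 3 * ((2:ℝ)^n)⁻¹ * T1)^2 := by
            rw [mul_pow, mul_pow, hs3]; ring
    calc Real.sqrt A ≤ Real.sqrt ((Real.sqrt 3 * ((2:ℝ)^n)⁻¹ * T1)^2) :=
          Real.sqrt_le_sqrt hA2
      _ = Real.sqrt 3 * ((2:ℝ)^n)⁻¹ * T1 := Real.sqrt_sq
            (mul_nonneg (mul_nonneg (Real.sqrt_nonneg 3) (inv_nonneg.2 h2n.le)) hT1nn)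
end

section
/- Let (X,d,μ) be a space of homogeneous type with upper dimension ω, δ ∈ (0,1), γ ∈ (0,∞), and r ∈ (ω/(ω+γ), 1]. Let {Q_i}_{i∈I} be a countable partition of X into Borel sets such that for each i there is a point z_i with B(z_i, c δ^k) ⊂ Q_i ⊂ B(z_i, C δ^k) (for fixed constants 0 < c ≤ C and some k ∈ ℤ), and let y_i ∈ Q_i and a_i ∈ ℂ be arbitrary. Then for every k' ∈ ℤ with k' ≤ k (so δ^{k∧k'} = δ^{k'} here written as ρ := δ^{min(k,k')}) and every x ∈ X, ∑_{i∈I} μ(Q_i) [V_ρ(x) + V(x,y_i)]^{-1} (ρ/(ρ + d(x,y_i)))^γ |a_i| ≤ C' δ^{[k − min(k,k')] ω (1 − 1/r)} [M(∑_{i∈I} |a_i|^r 1_{Q_i})(x)]^{1/r}, where M is the Hardy–Littlewood maximal operator and C' does not depend on k, k', x, the points y_i, or the a_i. -/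
set_option maxHeartbeats 2000000


open MeasureTheory
open scoped ENNReal

lemma qball_mono {X : Type*} (d : X → X → ℝ) (x : X) {s t : ℝ} (h : s ≤ t) :
    qball d x s ⊆ qball d x t := fun _ hw => lt_of_lt_of_le hw h

lemma rpow_logb_comm {x y : ℝ} (hx : 0 < x) (hy : 0 < y) :
    x ^ Real.logb 2 y = y ^ Real.logb 2 x := by
  conv_lhs => rw [← Real.rpow_logb two_pos (by norm_num) hx]
  conv_rhs => rw [← Real.rpow_logb two_pos (by norm_num) hy]
  rw [← Real.rpow_mul (by norm_num), ← Real.rpow_mul (by norm_num), mul_comm]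

lemma doub_pow {X : Type*} [MeasurableSpace X] (d : X → X → ℝ) (μ : Measure X) (Cμ : ℝ)
    (hdoub : ∀ x r, μ (qball d x (2 * r)) ≤ ENNReal.ofReal Cμ * μ (qball d x r)) :
    ∀ (n : ℕ) (x : X) (s : ℝ),
      μ (qball d x ((2:ℝ) ^ n * s)) ≤ ENNReal.ofReal Cμ ^ n * μ (qball d x s) := by
  intro n
  induction n with
  | zero => intro x s; simp
  | succ n ih =>
    intro x s
    have h1 : ((2:ℝ) ^ (n+1) * s) = 2 * ((2:ℝ) ^ n * s) := by ring
    rw [h1]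
    calc μ (qball d x (2 * ((2:ℝ) ^ n * s)))
        ≤ ENNReal.ofReal Cμ * μ (qball d x ((2:ℝ) ^ n * s)) := hdoub _ _
      _ ≤ ENNReal.ofReal Cμ * (ENNReal.ofReal Cμ ^ n * μ (qball d x s)) :=
          mul_le_mul_right (ih x s) _
      _ = ENNReal.ofReal Cμ ^ (n+1) * μ (qball d x s) := by ring

lemma doub_scale {X : Type*} [MeasurableSpace X] (d : X → X → ℝ) (μ : Measure X) {Cμ : ℝ}
    (hCμ : 1 ≤ Cμ)
    (hdoub : ∀ x r, μ (qball d x (2 * r)) ≤ ENNReal.ofReal Cμ * μ (qball d x r))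
    (x : X) {s lam : ℝ} (hs : 0 ≤ s) (hlam : 1 ≤ lam) :
    μ (qball d x (lam * s)) ≤ ENNReal.ofReal (Cμ * lam ^ Real.logb 2 Cμ) * μ (qball d x s) := by
  have hCμ0 : (0:ℝ) < Cμ := lt_of_lt_of_le one_pos hCμ
  have hlam0 : (0:ℝ) < lam := lt_of_lt_of_le one_pos hlam
  set n : ℕ := ⌈Real.logb 2 lam⌉₊ with hn
  have hlog0 : 0 ≤ Real.logb 2 lam := Real.logb_nonneg one_lt_two hlam
  have h1 : lam ≤ (2:ℝ) ^ n := by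
    calc lam = (2:ℝ) ^ Real.logb 2 lam := (Real.rpow_logb two_pos (by norm_num) hlam0).symm
      _ ≤ (2:ℝ) ^ ((n:ℝ)) := Real.rpow_le_rpow_of_exponent_le one_le_two (Nat.le_ceil _)
      _ = (2:ℝ) ^ n := Real.rpow_natCast 2 n
  have h2 : Cμ ^ n ≤ Cμ * lam ^ Real.logb 2 Cμ := by
    have hn2 : (n:ℝ) ≤ Real.logb 2 lam + 1 := (Nat.ceil_lt_add_one hlog0).le
    calc Cμ ^ n = Cμ ^ ((n:ℝ)) := (Real.rpow_natCast Cμ n).symm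
      _ ≤ Cμ ^ (Real.logb 2 lam + 1) := Real.rpow_le_rpow_of_exponent_le hCμ hn2
      _ = Cμ ^ Real.logb 2 lam * Cμ := by rw [Real.rpow_add hCμ0, Real.rpow_one]
      _ = Cμ * lam ^ Real.logb 2 Cμ := by rw [rpow_logb_comm hCμ0 hlam0, mul_comm]
  calc μ (qball d x (lam * s)) ≤ μ (qball d x ((2:ℝ) ^ n * s)) :=
        measure_mono (qball_mono d x (mul_le_mul_of_nonneg_right h1 hs))
    _ ≤ ENNReal.ofReal Cμ ^ n * μ (qball d x s) := doub_pow d μ Cμ hdoub n x s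
    _ ≤ ENNReal.ofReal (Cμ * lam ^ Real.logb 2 Cμ) * μ (qball d x s) := by
        refine mul_le_mul_left ?_ _
        rw [← ENNReal.ofReal_pow hCμ0.le]
        exact ENNReal.ofReal_le_ofReal h2


/-- On a space of homogeneous type with upper dimension `ω = log₂ Cμ`, let `γ > 0` and
`r ∈ (ω/(ω+γ),1]`. For any countable Borel partition `{Q_i}` of `X` at scale `δ^k`
(`B(z_i, c δ^k) ⊆ Q_i ⊆ B(z_i, C δ^k)`), any points `y_i ∈ Q_i`, coefficients `a_i ∈ ℂ`,
any `k' ≤ k` and any `x`, writing `ρ = δ^{min(k,k')}`: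
`∑_i μ(Q_i) (ρ/(ρ+d(x,y_i)))^γ |a_i| / [V_ρ(x)+V(x,y_i)]
  ≤ C' δ^{(k−min(k,k'))ω(1−1/r)} [M(∑_i |a_i|^r 1_{Q_i})(x)]^{1/r}`,
where `M` is the Hardy–Littlewood maximal operator and `C'` is independent of
`k, k', x, y_i, a_i`. -/
theorem stmt_11 {X : Type*} [MeasurableSpace X]
    (d : X → X → ℝ) (A₀ : ℝ) (hA₀ : 1 ≤ A₀)
    (hd_nonneg : ∀ x y, 0 ≤ d x y)
    (hd_symm : ∀ x y, d x y = d y x)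
    (hd_eq : ∀ x y, d x y = 0 ↔ x = y)
    (hd_tri : ∀ x y z, d x z ≤ A₀ * (d x y + d y z))
    (μ : Measure X) (Cμ : ℝ) (hCμ : 1 ≤ Cμ)
    (hdoub : ∀ x r, μ (qball d x (2 * r)) ≤ ENNReal.ofReal Cμ * μ (qball d x r))
    (hpos : ∀ (x : X) (r : ℝ), 0 < r → 0 < μ (qball d x r))
    (hfin : ∀ (x : X) (r : ℝ), μ (qball d x r) < ⊤)
    (δ γ r c C : ℝ) (hδ0 : 0 < δ) (hδ1 : δ < 1) (hγ : 0 < γ)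
    (hr0 : Real.logb 2 Cμ / (Real.logb 2 Cμ + γ) < r) (hr1 : r ≤ 1)
    (hc : 0 < c) (hcC : c ≤ C) :
    ∃ C' : ℝ, 0 < C' ∧ ∀ (k k' : ℤ), k' ≤ k →
      ∀ (ι : Type) [Countable ι], ∀ (Q : ι → Set X) (z y : ι → X) (a : ι → ℂ),
        (∀ i, MeasurableSet (Q i)) →
        (∀ i j, i ≠ j → Disjoint (Q i) (Q j)) →
        (⋃ i, Q i) = Set.univ →
        (∀ i, qball d (z i) (c * δ ^ k) ⊆ Q i) →
        (∀ i, Q i ⊆ qball d (z i) (C * δ ^ k)) →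
        (∀ i, y i ∈ Q i) →
        ∀ x : X,
          (∑' i, μ (Q i) *
              ENNReal.ofReal ((δ ^ min k k' / (δ ^ min k k' + d x (y i))) ^ γ * ‖a i‖) /
                (μ (qball d x (δ ^ min k k')) + μ (qball d x (d x (y i)))))
            ≤ ENNReal.ofReal
                (C' * δ ^ (((k : ℝ) - ((min k k' : ℤ) : ℝ)) * Real.logb 2 Cμ * (1 - 1 / r))) *
              (⨆ (s : ℝ) (_ : 0 < s), (μ (qball d x s))⁻¹ *
                  ∫⁻ w in qball d x s,
                    ∑' i, (Q i).indicator (fun _ => ENNReal.ofReal (‖a i‖ ^ r)) w ∂μ) ^ (1 / r) := by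
  classical
  have hCμ0 : (0:ℝ) < Cμ := lt_of_lt_of_le one_pos hCμ
  have hA₀0 : (0:ℝ) < A₀ := lt_of_lt_of_le one_pos hA₀
  set ω := Real.logb 2 Cμ with hωdef
  have hω0 : 0 ≤ ω := Real.logb_nonneg one_lt_two hCμ
  have hr0' : 0 < r := lt_of_le_of_lt (div_nonneg hω0 (by linarith)) hr0
  set p : ℝ := (1 - r) / r with hpdef
  have hp0 : 0 ≤ p := div_nonneg (by linarith) hr0'.le
  have hωpγ : ω * p < γ := by
    have h1 : ω < r * (ω + γ) := by rw [div_lt_iff₀ (by linarith : (0:ℝ) < ω + γ)] at hr0; exact hr0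
    have h2 : ω * p = ω * (1 - r) / r := by rw [hpdef]; ring
    rw [h2, div_lt_iff₀ hr0']
    nlinarith
  set K : ℝ := A₀^2 * (1 + 2*C) with hKdef
  have hC0 : (0:ℝ) < C := lt_of_lt_of_le hc hcC
  have hK1 : (1:ℝ) ≤ K := by nlinarith
  set L : ℝ := A₀ * (A₀ * (1+C) + K) with hLdef
  have hL0 : (0:ℝ) < L := by nlinarith
  have hA2 : (1:ℝ) ≤ A₀^2 := one_le_pow₀ hA₀
  have hLC : 1 + C ≤ L := by nlinarith [mul_pos hA₀0 (lt_of_lt_of_le one_pos hK1)]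
  set q : ℝ := (2:ℝ) ^ (ω * p - γ) with hqdef
  have hq0 : 0 < q := Real.rpow_pos_of_pos two_pos _
  have hq1 : q < 1 := Real.rpow_lt_one_of_one_lt_of_neg one_lt_two (by linarith)
  set W : ℝ := (2:ℝ) ^ γ * Cμ ^ (2:ℕ) * Cμ ^ p * (L/c) ^ (ω*p) * (Cμ * K ^ ω) with hWdef
  have hW0 : 0 < W := by
    have h1 : (0:ℝ) < (2:ℝ) ^ γ := Real.rpow_pos_of_pos two_pos _
    have h2 : (0:ℝ) < Cμ ^ p := Real.rpow_pos_of_pos hCμ0 _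
    have h3 : (0:ℝ) < (L/c) ^ (ω*p) := Real.rpow_pos_of_pos (div_pos hL0 hc) _
    have h4 : (0:ℝ) < K ^ ω := Real.rpow_pos_of_pos (by linarith) _
    exact mul_pos (mul_pos (mul_pos (mul_pos h1 (pow_pos hCμ0 2)) h2) h3) (mul_pos hCμ0 h4)
  refine ⟨W * (1-q)⁻¹, mul_pos hW0 (inv_pos.2 (by linarith)), ?_⟩
  intro k k' hkk' ι _ Q z y a hQm hQd hQu hzQ hQz hyQ x
  set m : ℤ := min k k' with hmdef
  have hmk : m ≤ k := min_le_left _ _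
  set ρ : ℝ := δ ^ m with hρdef
  have hρ0 : 0 < ρ := zpow_pos hδ0 m
  have hδk0 : (0:ℝ) < δ ^ k := zpow_pos hδ0 k
  have hδkρ : δ ^ k ≤ ρ := zpow_le_zpow_right_of_le_one₀ hδ0 hδ1.le hmk
  set MF := (⨆ (s : ℝ) (_ : 0 < s), (μ (qball d x s))⁻¹ *
      ∫⁻ w in qball d x s,
        ∑' i, (Q i).indicator (fun _ => ENNReal.ofReal (‖a i‖ ^ r)) w ∂μ) with hMFdef
  have hMF_ge : ∀ s : ℝ, 0 < s →
      (μ (qball d x s))⁻¹ * (∫⁻ w in qball d x s,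
        (∑' i, (Q i).indicator (fun _ => ENNReal.ofReal (‖a i‖ ^ r)) w) ∂μ) ≤ MF := by
    intro s hs
    rw [hMFdef]
    exact le_iSup₂ (f := fun (s : ℝ) (_ : 0 < s) => (μ (qball d x s))⁻¹ *
      ∫⁻ w in qball d x s,
        ∑' i, (Q i).indicator (fun _ => ENNReal.ofReal (‖a i‖ ^ r)) w ∂μ) s hs
  have hballfin : ∀ (x0 : X) (s : ℝ), μ (qball d x0 s) ≠ ⊤ := fun x0 s => (hfin x0 s).ne
  have hQfin : ∀ i, μ (Q i) ≠ ⊤ := fun i =>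
    ne_top_of_le_ne_top (hballfin (z i) _) (measure_mono (hQz i))
  have hQ0 : ∀ i, μ (Q i) ≠ 0 := fun i =>
    (lt_of_lt_of_le (hpos (z i) _ (mul_pos hc hδk0)) (measure_mono (hzQ i))).ne'
  set jfun : ι → ℕ := fun i =>
    if d x (y i) < ρ then 0 else ⌊Real.logb 2 (d x (y i) / ρ)⌋₊ + 1 with hjfundef
  have hjprop : ∀ i, d x (y i) < (2:ℝ) ^ (jfun i) * ρ ∧
      (2:ℝ) ^ (jfun i) * ρ ≤ 2 * (ρ + d x (y i)) := by
    intro i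
    have ht0 : 0 ≤ d x (y i) := hd_nonneg x (y i)
    by_cases h : d x (y i) < ρ
    · rw [hjfundef]
      simp only [if_pos h, pow_zero, one_mul]
      exact ⟨h, by linarith⟩
    · push_neg at h
      have ht0' : 0 < d x (y i) := lt_of_lt_of_le hρ0 h
      have hu1 : 1 ≤ d x (y i) / ρ := (one_le_div hρ0).2 h
      have hu0 : 0 < d x (y i) / ρ := lt_of_lt_of_le one_pos hu1
      set n : ℕ := ⌊Real.logb 2 (d x (y i) / ρ)⌋₊ with hndef
      have hjf : jfun i = n + 1 := by rw [hjfundef]; simp only [if_neg (not_lt.2 h), hndef]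
      have hlog0 : 0 ≤ Real.logb 2 (d x (y i) / ρ) := Real.logb_nonneg one_lt_two hu1
      have h1 : (2:ℝ) ^ n ≤ d x (y i) / ρ := by
        calc (2:ℝ) ^ n = (2:ℝ) ^ ((n:ℝ)) := (Real.rpow_natCast 2 n).symm
          _ ≤ (2:ℝ) ^ Real.logb 2 (d x (y i) / ρ) :=
              Real.rpow_le_rpow_of_exponent_le one_le_two (Nat.floor_le hlog0)
          _ = d x (y i) / ρ := Real.rpow_logb two_pos (by norm_num) hu0
      have h2 : d x (y i) / ρ < (2:ℝ) ^ (n + 1) := by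
        calc d x (y i) / ρ = (2:ℝ) ^ Real.logb 2 (d x (y i) / ρ) :=
              (Real.rpow_logb two_pos (by norm_num) hu0).symm
          _ < (2:ℝ) ^ (((n:ℝ) + 1)) :=
              Real.rpow_lt_rpow_of_exponent_lt one_lt_two (Nat.lt_floor_add_one _)
          _ = (2:ℝ) ^ (n + 1) := by
              rw [← Real.rpow_natCast 2 (n+1)]; norm_num
      rw [hjf]
      constructor
      · rw [div_lt_iff₀ hρ0] at h2; linarith
      · have h3 : (2:ℝ) ^ (n+1) * ρ ≤ 2 * d x (y i) := by
          have h4 : (2:ℝ) ^ n * ρ ≤ d x (y i) := (le_div_iff₀ hρ0).1 h1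
          have h5 : (2:ℝ) ^ (n+1) = 2 * (2:ℝ) ^ n := by ring
          rw [h5]; linarith
        linarith
  have hρB : ∀ i, ρ ≤ (2:ℝ) ^ (jfun i) * ρ := fun i =>
    le_mul_of_one_le_left hρ0.le (one_le_pow₀ one_le_two)
  have hB0 : ∀ i, (0:ℝ) < (2:ℝ) ^ (jfun i) * ρ := fun i => mul_pos (pow_pos two_pos _) hρ0
  have hE : ∀ i, C * δ ^ k ≤ C * ((2:ℝ) ^ (jfun i) * ρ) := fun i =>
    mul_le_mul_of_nonneg_left (le_trans hδkρ (hρB i)) hC0.le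
  have hxz : ∀ i, d x (z i) < A₀ * (1+C) * ((2:ℝ) ^ (jfun i) * ρ) := by
    intro i
    have hzy : d (z i) (y i) < C * δ ^ k := hQz i (hyQ i)
    have h1 : d x (z i) ≤ A₀ * (d x (y i) + d (y i) (z i)) := hd_tri x (y i) (z i)
    rw [hd_symm (y i) (z i)] at h1
    have ht : d x (y i) < (2:ℝ) ^ (jfun i) * ρ := (hjprop i).1
    have h2 : d (z i) (y i) < C * ((2:ℝ) ^ (jfun i) * ρ) := lt_of_lt_of_le hzy (hE i)
    calc d x (z i) ≤ A₀ * (d x (y i) + d (z i) (y i)) := h1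
      _ < A₀ * ((2:ℝ) ^ (jfun i) * ρ + C * ((2:ℝ) ^ (jfun i) * ρ)) :=
          mul_lt_mul_of_pos_left (by linarith) hA₀0
      _ = A₀ * (1+C) * ((2:ℝ) ^ (jfun i) * ρ) := by ring
  have hQsubB : ∀ i, Q i ⊆ qball d x (K * ((2:ℝ) ^ (jfun i) * ρ)) := by
    intro i w hw
    have hzw : d (z i) w < C * ((2:ℝ) ^ (jfun i) * ρ) := lt_of_lt_of_le (hQz i hw) (hE i)
    have h2 : d x w ≤ A₀ * (d x (z i) + d (z i) w) := hd_tri x (z i) w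
    show d x w < K * ((2:ℝ) ^ (jfun i) * ρ)
    have h3 : d x w < A₀ * (A₀ * (1+C) * ((2:ℝ) ^ (jfun i) * ρ) + C * ((2:ℝ) ^ (jfun i) * ρ)) :=
      lt_of_le_of_lt h2 (mul_lt_mul_of_pos_left (add_lt_add (hxz i) hzw) hA₀0)
    calc d x w < A₀ * (A₀ * (1+C) * ((2:ℝ) ^ (jfun i) * ρ) + C * ((2:ℝ) ^ (jfun i) * ρ)) := h3
      _ ≤ K * ((2:ℝ) ^ (jfun i) * ρ) := by
          rw [hKdef]
          nlinarith [mul_nonneg (mul_nonneg (mul_nonneg (sub_nonneg.2 hA₀) hA₀0.le) hC0.le)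
            (hB0 i).le]
  have hμQB : ∀ i, μ (qball d x (K * ((2:ℝ) ^ (jfun i) * ρ)))
      ≤ ENNReal.ofReal (Cμ * (L * (2:ℝ) ^ (jfun i) * ρ / (c * δ ^ k)) ^ ω) * μ (Q i) := by
    intro i
    have hck : (0:ℝ) < c * δ ^ k := mul_pos hc hδk0
    have hsub : qball d x (K * ((2:ℝ) ^ (jfun i) * ρ)) ⊆
        qball d (z i) (L * (2:ℝ) ^ (jfun i) * ρ) := by
      intro w hw
      have h1 : d (z i) w ≤ A₀ * (d (z i) x + d x w) := hd_tri (z i) x w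
      rw [hd_symm (z i) x] at h1
      show d (z i) w < L * (2:ℝ) ^ (jfun i) * ρ
      calc d (z i) w ≤ A₀ * (d x (z i) + d x w) := h1
        _ < A₀ * (A₀ * (1+C) * ((2:ℝ) ^ (jfun i) * ρ) + K * ((2:ℝ) ^ (jfun i) * ρ)) :=
            mul_lt_mul_of_pos_left (add_lt_add (hxz i) hw) hA₀0
        _ = L * (2:ℝ) ^ (jfun i) * ρ := by rw [hLdef]; ring
    have hlam1 : 1 ≤ L * (2:ℝ) ^ (jfun i) * ρ / (c * δ ^ k) := by
      rw [le_div_iff₀ hck]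
      have h1 : c * δ ^ k ≤ L * δ ^ k := mul_le_mul_of_nonneg_right (by linarith) hδk0.le
      have h2 : L * δ ^ k ≤ L * ρ := mul_le_mul_of_nonneg_left hδkρ hL0.le
      have h3 : L * ρ ≤ L * ((2:ℝ) ^ (jfun i) * ρ) := mul_le_mul_of_nonneg_left (hρB i) hL0.le
      calc (1:ℝ) * (c * δ ^ k) = c * δ ^ k := one_mul _
        _ ≤ L * ((2:ℝ) ^ (jfun i) * ρ) := by linarith
        _ = L * (2:ℝ) ^ (jfun i) * ρ := by ring
    have heq : L * (2:ℝ) ^ (jfun i) * ρ / (c * δ ^ k) * (c * δ ^ k) =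
        L * (2:ℝ) ^ (jfun i) * ρ := div_mul_cancel₀ _ hck.ne'
    calc μ (qball d x (K * ((2:ℝ) ^ (jfun i) * ρ)))
        ≤ μ (qball d (z i) (L * (2:ℝ) ^ (jfun i) * ρ)) := measure_mono hsub
      _ = μ (qball d (z i) (L * (2:ℝ) ^ (jfun i) * ρ / (c * δ ^ k) * (c * δ ^ k))) := by
          rw [heq]
      _ ≤ ENNReal.ofReal (Cμ * (L * (2:ℝ) ^ (jfun i) * ρ / (c * δ ^ k)) ^ ω) *
          μ (qball d (z i) (c * δ ^ k)) := doub_scale d μ hCμ hdoub (z i) hck.le hlam1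
      _ ≤ ENNReal.ofReal (Cμ * (L * (2:ℝ) ^ (jfun i) * ρ / (c * δ ^ k)) ^ ω) * μ (Q i) :=
          mul_le_mul_right (measure_mono (hzQ i)) _
  have hTj : ∀ j : ℕ, (∑' i, if jfun i = j then
        μ (Q i) * ENNReal.ofReal ((ρ / (ρ + d x (y i))) ^ γ * ‖a i‖) /
          (μ (qball d x ρ) + μ (qball d x (d x (y i)))) else 0)
      ≤ ENNReal.ofReal q ^ j *
        (ENNReal.ofReal (W * δ ^ (((k : ℝ) - (m : ℝ)) * ω * (1 - 1 / r))) * MF ^ (1 / r)) := by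
    intro j
    set Bs := qball d x ((2:ℝ) ^ j * ρ) with hBsdef
    set Bb := qball d x (K * ((2:ℝ) ^ j * ρ)) with hBbdef
    have hBs0 : μ Bs ≠ 0 := (hpos x _ (mul_pos (pow_pos two_pos j) hρ0)).ne'
    have hBsfin : μ Bs ≠ ⊤ := hballfin x _
    have hKB0 : (0:ℝ) < K * ((2:ℝ) ^ j * ρ) :=
      mul_pos (by linarith) (mul_pos (pow_pos two_pos j) hρ0)
    have hBb0 : μ Bb ≠ 0 := (hpos x _ hKB0).ne'
    have hBbfin : μ Bb ≠ ⊤ := hballfin x _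
    set vj : ℝ := (2:ℝ) ^ (γ - (j:ℝ)*γ) with hvjdef
    have hvj0 : (0:ℝ) ≤ vj := (Real.rpow_pos_of_pos two_pos _).le
    have hlampos : (0:ℝ) < L * (2:ℝ) ^ j * ρ / (c * δ ^ k) :=
      div_pos (mul_pos (mul_pos hL0 (pow_pos two_pos j)) hρ0) (mul_pos hc hδk0)
    set Dj : ℝ := Cμ * (L * (2:ℝ) ^ j * ρ / (c * δ ^ k)) ^ ω with hDjdef
    have hDj0 : (0:ℝ) < Dj := mul_pos hCμ0 (Real.rpow_pos_of_pos hlampos _)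
    set I : ℝ≥0∞ := ∫⁻ w in Bb,
      (∑' i, (Q i).indicator (fun _ => ENNReal.ofReal (‖a i‖ ^ r)) w) ∂μ with hIdef
    have hIf : I = ∑' i, ENNReal.ofReal (‖a i‖ ^ r) * μ (Q i ∩ Bb) := by
      rw [hIdef, lintegral_tsum (fun i => (measurable_const.indicator (hQm i)).aemeasurable)]
      refine tsum_congr fun i => ?_
      rw [lintegral_indicator_const (hQm i), Measure.restrict_apply (hQm i)]
    have hIle : I ≤ μ Bb * MF := by
      have h1 : (μ Bb)⁻¹ * I ≤ MF := hMF_ge _ hKB0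
      calc I = μ Bb * ((μ Bb)⁻¹ * I) := by
            rw [← mul_assoc, ENNReal.mul_inv_cancel hBb0 hBbfin, one_mul]
        _ ≤ μ Bb * MF := mul_le_mul_right h1 _
    have hc2ne0 : ENNReal.ofReal (Cμ ^ (2:ℕ)) ≠ 0 := (ENNReal.ofReal_pos.2 (pow_pos hCμ0 2)).ne'
    have hc2fin : ENNReal.ofReal (Cμ ^ (2:ℕ)) ≠ ⊤ := ENNReal.ofReal_ne_top
    have hA : ∀ i, (if jfun i = j then
          μ (Q i) * ENNReal.ofReal ((ρ / (ρ + d x (y i))) ^ γ * ‖a i‖) /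
            (μ (qball d x ρ) + μ (qball d x (d x (y i)))) else 0)
        ≤ (ENNReal.ofReal vj * ENNReal.ofReal (Cμ ^ (2:ℕ)) * (μ Bs)⁻¹) *
          (if jfun i = j then μ (Q i) * ENNReal.ofReal ‖a i‖ else 0) := by
      intro i
      by_cases hij : jfun i = j
      · rw [if_pos hij, if_pos hij]
        have ht0 : 0 ≤ d x (y i) := hd_nonneg x (y i)
        have hrt : 0 < ρ + d x (y i) := by linarith
        have hu : (ρ / (ρ + d x (y i))) ^ γ ≤ vj := by
          have hj2 := (hjprop i).2
          rw [hij] at hj2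
          have hb : ρ / (ρ + d x (y i)) ≤ 2 / (2:ℝ) ^ j := by
            rw [div_le_div_iff₀ hrt (pow_pos two_pos j)]
            linarith
          have hb2 : 2 / (2:ℝ) ^ j = (2:ℝ) ^ ((1:ℝ) - (j:ℝ)) := by
            rw [Real.rpow_sub two_pos, Real.rpow_one, Real.rpow_natCast]
          calc (ρ / (ρ + d x (y i))) ^ γ ≤ ((2:ℝ) ^ ((1:ℝ) - (j:ℝ))) ^ γ :=
                Real.rpow_le_rpow (div_nonneg hρ0.le hrt.le) (hb2 ▸ hb) hγ.le
            _ = (2:ℝ) ^ (((1:ℝ) - (j:ℝ)) * γ) := (Real.rpow_mul two_pos.le _ _).symm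
            _ = vj := by rw [hvjdef]; congr 1; ring
        have hnum : ENNReal.ofReal ((ρ / (ρ + d x (y i))) ^ γ * ‖a i‖) ≤
            ENNReal.ofReal vj * ENNReal.ofReal ‖a i‖ := by
          rw [← ENNReal.ofReal_mul hvj0]
          exact ENNReal.ofReal_le_ofReal (mul_le_mul_of_nonneg_right hu (norm_nonneg _))
        have hden : (ENNReal.ofReal (Cμ ^ (2:ℕ)))⁻¹ * μ Bs ≤
            μ (qball d x ρ) + μ (qball d x (d x (y i))) := by
          have hmaxle : μ (qball d x (max ρ (d x (y i)))) ≤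
              μ (qball d x ρ) + μ (qball d x (d x (y i))) := by
            rcases max_choice ρ (d x (y i)) with h | h <;> rw [h]
            · exact le_self_add
            · exact le_add_self
          have hsub : Bs ⊆ qball d x (2 * (2 * max ρ (d x (y i)))) := by
            apply qball_mono
            have hj2 := (hjprop i).2
            rw [hij] at hj2
            have h1 := le_max_left ρ (d x (y i))
            have h2 := le_max_right ρ (d x (y i))
            linarith
          have h2 : μ Bs ≤ ENNReal.ofReal (Cμ ^ (2:ℕ)) *
              (μ (qball d x ρ) + μ (qball d x (d x (y i)))) := by
            calc μ Bs ≤ μ (qball d x (2 * (2 * max ρ (d x (y i))))) := measure_mono hsub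
              _ ≤ ENNReal.ofReal Cμ * μ (qball d x (2 * max ρ (d x (y i)))) := hdoub _ _
              _ ≤ ENNReal.ofReal Cμ * (ENNReal.ofReal Cμ * μ (qball d x (max ρ (d x (y i))))) :=
                  mul_le_mul_right (hdoub _ _) _
              _ ≤ ENNReal.ofReal Cμ * (ENNReal.ofReal Cμ *
                  (μ (qball d x ρ) + μ (qball d x (d x (y i))))) :=
                  mul_le_mul_right (mul_le_mul_right hmaxle _) _
              _ = ENNReal.ofReal (Cμ ^ (2:ℕ)) *
                  (μ (qball d x ρ) + μ (qball d x (d x (y i)))) := by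
                  rw [ENNReal.ofReal_pow hCμ0.le, pow_two, mul_assoc]
          calc (ENNReal.ofReal (Cμ ^ (2:ℕ)))⁻¹ * μ Bs
              ≤ (ENNReal.ofReal (Cμ ^ (2:ℕ)))⁻¹ * (ENNReal.ofReal (Cμ ^ (2:ℕ)) *
                (μ (qball d x ρ) + μ (qball d x (d x (y i))))) := mul_le_mul_right h2 _
            _ = μ (qball d x ρ) + μ (qball d x (d x (y i))) := by
                rw [← mul_assoc, ENNReal.inv_mul_cancel hc2ne0 hc2fin, one_mul]
        have hinv : ((ENNReal.ofReal (Cμ ^ (2:ℕ)))⁻¹ * μ Bs)⁻¹ =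
            ENNReal.ofReal (Cμ ^ (2:ℕ)) * (μ Bs)⁻¹ := by
          rw [ENNReal.mul_inv (Or.inr hBsfin) (Or.inr hBs0), inv_inv]
        calc μ (Q i) * ENNReal.ofReal ((ρ / (ρ + d x (y i))) ^ γ * ‖a i‖) /
              (μ (qball d x ρ) + μ (qball d x (d x (y i))))
            ≤ μ (Q i) * (ENNReal.ofReal vj * ENNReal.ofReal ‖a i‖) /
              ((ENNReal.ofReal (Cμ ^ (2:ℕ)))⁻¹ * μ Bs) :=
              ENNReal.div_le_div (mul_le_mul_right hnum _) hden
          _ = (ENNReal.ofReal vj * ENNReal.ofReal (Cμ ^ (2:ℕ)) * (μ Bs)⁻¹) *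
              (μ (Q i) * ENNReal.ofReal ‖a i‖) := by
              rw [div_eq_mul_inv, hinv]; ring
      · rw [if_neg hij, if_neg hij, mul_zero]
    have hαb : ∀ i, jfun i = j → (ENNReal.ofReal ‖a i‖) ^ r ≤ ENNReal.ofReal Dj * MF := by
      intro i hij
      have hsubB := hQsubB i
      rw [hij, ← hBbdef] at hsubB
      have hQBi := hμQB i
      rw [hij, ← hBbdef, ← hDjdef] at hQBi
      have hmem : (ENNReal.ofReal ‖a i‖) ^ r * μ (Q i) ≤ I := by
        rw [hIf]
        have hle := ENNReal.le_tsum (f := fun i' =>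
          ENNReal.ofReal (‖a i'‖ ^ r) * μ (Q i' ∩ Bb)) i
        rw [Set.inter_eq_self_of_subset_left hsubB,
          ← ENNReal.ofReal_rpow_of_nonneg (norm_nonneg _) hr0'.le] at hle
        exact hle
      calc (ENNReal.ofReal ‖a i‖) ^ r
          = (ENNReal.ofReal ‖a i‖) ^ r * μ (Q i) * (μ (Q i))⁻¹ := by
            rw [mul_assoc, ENNReal.mul_inv_cancel (hQ0 i) (hQfin i), mul_one]
        _ ≤ μ Bb * MF * (μ (Q i))⁻¹ := mul_le_mul_left (le_trans hmem hIle) _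
        _ ≤ ENNReal.ofReal Dj * μ (Q i) * MF * (μ (Q i))⁻¹ := by gcongr
        _ = ENNReal.ofReal Dj * MF * (μ (Q i) * (μ (Q i))⁻¹) := by ring
        _ = ENNReal.ofReal Dj * MF := by
            rw [ENNReal.mul_inv_cancel (hQ0 i) (hQfin i), mul_one]
    have hD : ∀ i, (if jfun i = j then μ (Q i) * ENNReal.ofReal ‖a i‖ else 0)
        ≤ (ENNReal.ofReal Dj * MF) ^ p *
          (if jfun i = j then μ (Q i) * (ENNReal.ofReal ‖a i‖) ^ r else 0) := by
      intro i
      by_cases hij : jfun i = j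
      · rw [if_pos hij, if_pos hij]
        have hsplit : ENNReal.ofReal ‖a i‖ =
            ((ENNReal.ofReal ‖a i‖) ^ r) ^ p * (ENNReal.ofReal ‖a i‖) ^ r := by
          rw [← ENNReal.rpow_mul]
          have h1 : r * p = 1 - r := by rw [hpdef]; field_simp
          rw [h1, ← ENNReal.rpow_add_of_nonneg (1-r) r (by linarith) hr0'.le, sub_add_cancel,
            ENNReal.rpow_one]
        calc μ (Q i) * ENNReal.ofReal ‖a i‖
            = μ (Q i) * (((ENNReal.ofReal ‖a i‖) ^ r) ^ p * (ENNReal.ofReal ‖a i‖) ^ r) := by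
              rw [← hsplit]
          _ ≤ μ (Q i) * ((ENNReal.ofReal Dj * MF) ^ p * (ENNReal.ofReal ‖a i‖) ^ r) := by
              gcongr
              exact hαb i hij
          _ = (ENNReal.ofReal Dj * MF) ^ p * (μ (Q i) * (ENNReal.ofReal ‖a i‖) ^ r) := by ring
      · rw [if_neg hij, if_neg hij]; simp
    have hE2 : (∑' i, if jfun i = j then μ (Q i) * (ENNReal.ofReal ‖a i‖) ^ r else 0) ≤ I := by
      rw [hIf]
      refine ENNReal.tsum_le_tsum fun i => ?_
      by_cases hij : jfun i = j
      · rw [if_pos hij]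
        have hsubB := hQsubB i
        rw [hij, ← hBbdef] at hsubB
        rw [Set.inter_eq_self_of_subset_left hsubB,
          ← ENNReal.ofReal_rpow_of_nonneg (norm_nonneg _) hr0'.le, mul_comm]
      · rw [if_neg hij]; exact zero_le
    have hBsBb : (μ Bs)⁻¹ * μ Bb ≤ ENNReal.ofReal (Cμ * K ^ ω) := by
      have h1 : μ Bb ≤ ENNReal.ofReal (Cμ * K ^ ω) * μ Bs :=
        doub_scale d μ hCμ hdoub x (mul_pos (pow_pos two_pos j) hρ0).le hK1
      calc (μ Bs)⁻¹ * μ Bb ≤ (μ Bs)⁻¹ * (ENNReal.ofReal (Cμ * K ^ ω) * μ Bs) :=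
            mul_le_mul_right h1 _
        _ = ENNReal.ofReal (Cμ * K ^ ω) * ((μ Bs)⁻¹ * μ Bs) := by ring
        _ = ENNReal.ofReal (Cμ * K ^ ω) := by
            rw [ENNReal.inv_mul_cancel hBs0 hBsfin, mul_one]
    have hMFpow : MF ^ p * MF = MF ^ ((1:ℝ)/r) := by
      have h1 : (1:ℝ)/r = p + 1 := by rw [hpdef]; field_simp; ring
      rw [h1, ENNReal.rpow_add_of_nonneg p 1 hp0 zero_le_one, ENNReal.rpow_one]
    have hRC : vj * Cμ ^ (2:ℕ) * Dj ^ p * (Cμ * K ^ ω) =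
        q ^ j * (W * δ ^ (((k : ℝ) - (m : ℝ)) * ω * (1 - 1 / r))) := by
      have hck : (0:ℝ) < c * δ ^ k := mul_pos hc hδk0
      have hlameq : L * (2:ℝ) ^ j * ρ / (c * δ ^ k) =
          (L/c) * ((2:ℝ) ^ j) * (δ ^ ((m - k : ℤ))) := by
        rw [zpow_sub₀ hδ0.ne' m k, ← hρdef]
        field_simp
      have h1 : Dj ^ p = Cμ ^ p * ((L/c) ^ (ω*p) * ((2:ℝ) ^ ((j:ℝ) * (ω*p))) *
          (δ ^ (((k : ℝ) - (m : ℝ)) * ω * (1 - 1 / r)))) := by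
        rw [hDjdef, Real.mul_rpow hCμ0.le (Real.rpow_pos_of_pos hlampos ω).le, hlameq]
        congr 1
        rw [← Real.rpow_mul (by positivity), Real.mul_rpow (by positivity) (by positivity),
          Real.mul_rpow (by positivity) (by positivity)]
        congr 1
        · congr 1
          rw [← Real.rpow_natCast 2 j, ← Real.rpow_mul two_pos.le]
        · rw [← Real.rpow_intCast δ (m - k), ← Real.rpow_mul hδ0.le]
          congr 1
          push_cast
          rw [hpdef]
          field_simp
          ring
      have h5 : vj * (2:ℝ) ^ ((j:ℝ) * (ω*p)) = (2:ℝ) ^ γ * q ^ j := by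
        rw [hvjdef, hqdef, ← Real.rpow_natCast ((2:ℝ) ^ (ω * p - γ)) j,
          ← Real.rpow_mul two_pos.le, ← Real.rpow_add two_pos, ← Real.rpow_add two_pos]
        congr 1
        ring
      calc vj * Cμ ^ (2:ℕ) * Dj ^ p * (Cμ * K ^ ω)
          = (vj * (2:ℝ) ^ ((j:ℝ) * (ω*p))) * (Cμ ^ (2:ℕ) * Cμ ^ p * (L/c) ^ (ω*p) *
            (Cμ * K ^ ω)) * δ ^ (((k : ℝ) - (m : ℝ)) * ω * (1 - 1 / r)) := by
            rw [h1]; ring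
        _ = q ^ j * (W * δ ^ (((k : ℝ) - (m : ℝ)) * ω * (1 - 1 / r))) := by
            rw [h5, hWdef]; ring
    calc (∑' i, if jfun i = j then
          μ (Q i) * ENNReal.ofReal ((ρ / (ρ + d x (y i))) ^ γ * ‖a i‖) /
            (μ (qball d x ρ) + μ (qball d x (d x (y i)))) else 0)
        ≤ ∑' i, (ENNReal.ofReal vj * ENNReal.ofReal (Cμ ^ (2:ℕ)) * (μ Bs)⁻¹) *
          (if jfun i = j then μ (Q i) * ENNReal.ofReal ‖a i‖ else 0) :=
          ENNReal.tsum_le_tsum hA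
      _ = (ENNReal.ofReal vj * ENNReal.ofReal (Cμ ^ (2:ℕ)) * (μ Bs)⁻¹) *
          ∑' i, (if jfun i = j then μ (Q i) * ENNReal.ofReal ‖a i‖ else 0) :=
          ENNReal.tsum_mul_left
      _ ≤ (ENNReal.ofReal vj * ENNReal.ofReal (Cμ ^ (2:ℕ)) * (μ Bs)⁻¹) *
          ((ENNReal.ofReal Dj * MF) ^ p *
            ∑' i, (if jfun i = j then μ (Q i) * (ENNReal.ofReal ‖a i‖) ^ r else 0)) := by
          refine mul_le_mul_right ?_ _
          calc (∑' i, if jfun i = j then μ (Q i) * ENNReal.ofReal ‖a i‖ else 0)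
              ≤ ∑' i, (ENNReal.ofReal Dj * MF) ^ p *
                (if jfun i = j then μ (Q i) * (ENNReal.ofReal ‖a i‖) ^ r else 0) :=
                 ENNReal.tsum_le_tsum hD
            _ = _ := ENNReal.tsum_mul_left
      _ ≤ (ENNReal.ofReal vj * ENNReal.ofReal (Cμ ^ (2:ℕ)) * (μ Bs)⁻¹) *
          ((ENNReal.ofReal Dj * MF) ^ p * (μ Bb * MF)) := by
          gcongr
          exact le_trans hE2 hIle
      _ = (ENNReal.ofReal vj * ENNReal.ofReal (Cμ ^ (2:ℕ)) * (ENNReal.ofReal Dj) ^ p) *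
          ((μ Bs)⁻¹ * μ Bb) * (MF ^ p * MF) := by
          rw [ENNReal.mul_rpow_of_nonneg _ _ hp0]; ring
      _ ≤ (ENNReal.ofReal vj * ENNReal.ofReal (Cμ ^ (2:ℕ)) * (ENNReal.ofReal Dj) ^ p) *
          ENNReal.ofReal (Cμ * K ^ ω) * (MF ^ p * MF) := by
          exact mul_le_mul_left (mul_le_mul_right hBsBb _) _
      _ = ENNReal.ofReal (vj * Cμ ^ (2:ℕ) * Dj ^ p * (Cμ * K ^ ω)) * MF ^ ((1:ℝ)/r) := by
          rw [hMFpow, ENNReal.ofReal_rpow_of_nonneg hDj0.le hp0,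
            ← ENNReal.ofReal_mul hvj0, ← ENNReal.ofReal_mul (by positivity),
            ← ENNReal.ofReal_mul (by positivity)]
      _ = ENNReal.ofReal (q ^ j * (W * δ ^ (((k : ℝ) - (m : ℝ)) * ω * (1 - 1 / r)))) *
          MF ^ ((1:ℝ)/r) := by rw [hRC]
      _ = ENNReal.ofReal q ^ j *
          (ENNReal.ofReal (W * δ ^ (((k : ℝ) - (m : ℝ)) * ω * (1 - 1 / r))) * MF ^ ((1:ℝ)/r)) := by
          rw [ENNReal.ofReal_mul (pow_nonneg hq0.le j), ENNReal.ofReal_pow hq0.le, mul_assoc]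
  calc (∑' i, μ (Q i) * ENNReal.ofReal ((ρ / (ρ + d x (y i))) ^ γ * ‖a i‖) /
          (μ (qball d x ρ) + μ (qball d x (d x (y i)))))
      = ∑' i, ∑' j : ℕ, (if jfun i = j then
          μ (Q i) * ENNReal.ofReal ((ρ / (ρ + d x (y i))) ^ γ * ‖a i‖) /
            (μ (qball d x ρ) + μ (qball d x (d x (y i)))) else 0) := by
        refine tsum_congr fun i => ?_
        rw [tsum_eq_single (jfun i) (fun j hj => if_neg fun hh => hj hh.symm), if_pos rfl]
    _ = ∑' j : ℕ, ∑' i, (if jfun i = j then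
          μ (Q i) * ENNReal.ofReal ((ρ / (ρ + d x (y i))) ^ γ * ‖a i‖) /
            (μ (qball d x ρ) + μ (qball d x (d x (y i)))) else 0) := ENNReal.tsum_comm
    _ ≤ ∑' j : ℕ, ENNReal.ofReal q ^ j *
        (ENNReal.ofReal (W * δ ^ (((k : ℝ) - (m : ℝ)) * ω * (1 - 1 / r))) * MF ^ (1 / r)) :=
        ENNReal.tsum_le_tsum hTj
    _ = (∑' j : ℕ, ENNReal.ofReal q ^ j) *
        (ENNReal.ofReal (W * δ ^ (((k : ℝ) - (m : ℝ)) * ω * (1 - 1 / r))) * MF ^ (1 / r)) :=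
        ENNReal.tsum_mul_right
    _ = (1 - ENNReal.ofReal q)⁻¹ *
        (ENNReal.ofReal (W * δ ^ (((k : ℝ) - (m : ℝ)) * ω * (1 - 1 / r))) * MF ^ (1 / r)) := by
        rw [ENNReal.tsum_geometric]
    _ = ENNReal.ofReal (W * (1 - q)⁻¹ * δ ^ (((k : ℝ) - (m : ℝ)) * ω * (1 - 1 / r))) *
        MF ^ (1 / r) := by
        have h₁ : (1 - ENNReal.ofReal q)⁻¹ = ENNReal.ofReal (1 - q)⁻¹ := by
          rw [← ENNReal.ofReal_one, ← ENNReal.ofReal_sub 1 hq0.le,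
            ENNReal.ofReal_inv_of_pos (by linarith)]
        have hδe : (0:ℝ) ≤ δ ^ (((k : ℝ) - (m : ℝ)) * ω * (1 - 1 / r)) :=
          (Real.rpow_pos_of_pos hδ0 _).le
        rw [h₁, ← mul_assoc, ← ENNReal.ofReal_mul (inv_nonneg.2 (by linarith : (0:ℝ) ≤ 1 - q))]
        congr 2
        ring
end

section
/- Let (X,d,μ) be a space of homogeneous type and let s, γ ∈ (0,∞) with s < γ. Suppose K : X×X → ℂ is measurable, satisfies the size bound |K(x,y)| ≤ [V_r(x) + V(x,y)]^{-1} (r/(r + d(x,y)))^γ for some r > 0 and all x,y, and the cancellation ∫_X K(x,y) dμ(y) = 0 for all x. If f : X → ℂ satisfies |f(y) − f(y')| ≤ L d(y,y')^s for all y,y' (i.e. f ∈ Ċ^s(X) with seminorm L), then there is C > 0, independent of K, f, r, x, such that |∫_X K(x,y) f(y) dμ(y)| ≤ C L r^s for all x ∈ X. -/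
open MeasureTheory
open scoped ENNReal

/-- On a space of homogeneous type, let `0 < s < γ`. If `K` satisfies the size bound
`|K(x,y)| ≤ [V_r(x)+V(x,y)]^{-1} (r/(r+d(x,y)))^γ` (for some `r > 0`) and the cancellation
`∫ K(x,·) dμ = 0`, and `f` is `s`-Hölder with seminorm `L`, then
`|∫ K(x,y) f(y) dμ(y)| ≤ C L r^s` with `C` independent of `K, f, r, x`. -/
theorem stmt_14 {X : Type*} [MeasurableSpace X]
    (d : X → X → ℝ) (A₀ : ℝ) (hA₀ : 1 ≤ A₀)
    (hd_nonneg : ∀ x y, 0 ≤ d x y)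
    (hd_symm : ∀ x y, d x y = d y x)
    (hd_eq : ∀ x y, d x y = 0 ↔ x = y)
    (hd_tri : ∀ x y z, d x z ≤ A₀ * (d x y + d y z))
    (μ : Measure X) (Cμ : ℝ) (hCμ : 1 ≤ Cμ)
    (hdoub : ∀ x r, μ (qball d x (2 * r)) ≤ ENNReal.ofReal Cμ * μ (qball d x r))
    (hpos : ∀ (x : X) (r : ℝ), 0 < r → 0 < μ (qball d x r))
    (hfin : ∀ (x : X) (r : ℝ), μ (qball d x r) < ⊤)
    (s γ : ℝ) (hs : 0 < s) (hsγ : s < γ) :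
    ∃ C : ℝ, 0 < C ∧ ∀ (r : ℝ), 0 < r → ∀ (K : X → X → ℂ) (f : X → ℂ) (L : ℝ), 0 ≤ L →
      (∀ x, Integrable (fun y => K x y) μ) →
      (∀ x, Integrable (fun y => K x y * f y) μ) →
      (∀ x y, ‖K x y‖ ≤
        ((μ (qball d x r)).toReal + (μ (qball d x (d x y))).toReal)⁻¹ *
          (r / (r + d x y)) ^ γ) →
      (∀ x, ∫ y, K x y ∂μ = 0) →
      (∀ y y', ‖f y - f y'‖ ≤ L * d y y' ^ s) →
      ∀ x, ‖∫ y, K x y * f y ∂μ‖ ≤ C * L * r ^ s := by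
  have hε0 : 0 < γ - s := sub_pos.2 hsγ
  set ε : ℝ := γ - s with hεdef
  set q : ℝ := (2 : ℝ) ^ (-ε) with hqdef
  have hq0 : 0 < q := Real.rpow_pos_of_pos two_pos _
  have hq1 : q < 1 := Real.rpow_lt_one_of_one_lt_of_neg one_lt_two (neg_neg_of_pos hε0)
  have hCpos : 0 < 1 + Cμ * (1 - q)⁻¹ := by
    have h1 : 0 < (1 - q)⁻¹ := inv_pos.2 (by linarith)
    nlinarith
  refine ⟨1 + Cμ * (1 - q)⁻¹, hCpos, ?_⟩
  intro r hr K f L hL hKint hKfint hsize hcanc hHold x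
  -- abbreviations
  set Vr : ℝ := (μ (qball d x r)).toReal with hVrdef
  have hVr0 : 0 < Vr := ENNReal.toReal_pos (hpos x r hr).ne' (hfin x r).ne
  -- step 1 : replace f by f - f x
  have hstep1 : ∫ y, K x y * f y ∂μ = ∫ y, K x y * (f y - f x) ∂μ := by
    have h1 : (fun y => K x y * (f y - f x)) =
        fun y => K x y * f y - K x y • f x := by
      funext y; simp [smul_eq_mul]; ring
    rw [h1, integral_sub (hKfint x) ((hKint x).smul_const (f x)),
      integral_smul_const, hcanc x, zero_smul, sub_zero]
  rw [hstep1]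
  -- the dominating function
  set H : X → ℝ≥0∞ := fun y =>
    ENNReal.ofReal ((Vr + (μ (qball d x (d x y))).toReal)⁻¹ * (r / (r + d x y)) ^ ε)
    with hHdef
  -- pointwise bound
  have hpt : ∀ y, ENNReal.ofReal ‖K x y * (f y - f x)‖ ≤
      ENNReal.ofReal (L * r ^ s) * H y := by
    intro y
    set t : ℝ := d x y with htdef
    have ht0 : 0 ≤ t := hd_nonneg x y
    have hrt : 0 < r + t := by linarith
    set a : ℝ := r / (r + t) with hadef
    have ha0 : 0 < a := div_pos hr hrt
    set Vy : ℝ := (μ (qball d x t)).toReal with hVydef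
    have hVy0 : 0 ≤ Vy := ENNReal.toReal_nonneg
    have hVinv0 : (0:ℝ) ≤ (Vr + Vy)⁻¹ := inv_nonneg.2 (by linarith)
    have hclaim : a ^ γ * t ^ s ≤ r ^ s * a ^ ε := by
      have h1 : a ^ γ = a ^ ε * a ^ s := by
        rw [← Real.rpow_add ha0, show ε + s = γ by rw [hεdef]; ring]
      have h2 : a * t ≤ r := by
        rw [hadef, div_mul_eq_mul_div, div_le_iff₀ hrt]
        nlinarith
      have h3 : a ^ s * t ^ s ≤ r ^ s := by
        rw [← Real.mul_rpow ha0.le ht0]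
        exact Real.rpow_le_rpow (by positivity) h2 hs.le
      calc a ^ γ * t ^ s = a ^ ε * (a ^ s * t ^ s) := by rw [h1]; ring
        _ ≤ a ^ ε * r ^ s := by
            exact mul_le_mul_of_nonneg_left h3 (Real.rpow_nonneg ha0.le _)
        _ = r ^ s * a ^ ε := mul_comm _ _
    have hnorm : ‖K x y * (f y - f x)‖ ≤
        L * r ^ s * ((Vr + Vy)⁻¹ * a ^ ε) := by
      rw [norm_mul]
      have hf : ‖f y - f x‖ ≤ L * t ^ s := by
        have := hHold y x
        rwa [hd_symm y x] at this
      calc ‖K x y‖ * ‖f y - f x‖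
          ≤ ((Vr + Vy)⁻¹ * a ^ γ) * (L * t ^ s) := by
            apply mul_le_mul (hsize x y) hf (norm_nonneg _)
            positivity
        _ = ((Vr + Vy)⁻¹ * L) * (a ^ γ * t ^ s) := by ring
        _ ≤ ((Vr + Vy)⁻¹ * L) * (r ^ s * a ^ ε) := by
            apply mul_le_mul_of_nonneg_left hclaim
            exact mul_nonneg hVinv0 hL
        _ = L * r ^ s * ((Vr + Vy)⁻¹ * a ^ ε) := by ring
    calc ENNReal.ofReal ‖K x y * (f y - f x)‖
        ≤ ENNReal.ofReal (L * r ^ s * ((Vr + Vy)⁻¹ * a ^ ε)) :=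
          ENNReal.ofReal_le_ofReal hnorm
      _ = ENNReal.ofReal (L * r ^ s) * H y := by
          rw [ENNReal.ofReal_mul (by positivity)]
  -- the measurable exhaustion
  set T : ℕ → Set X := fun k => toMeasurable μ (qball d x (2 ^ k * r)) with hTdef
  set B : ℕ → Set X := fun k => ⋂ j, T (k + j) with hBdef
  have hqT : ∀ k, qball d x (2 ^ k * r) ⊆ T k := fun k => subset_toMeasurable μ _
  have hqball_mono : ∀ {u v : ℝ}, u ≤ v → qball d x u ⊆ qball d x v := by
    intro u v huv y hy; exact lt_of_lt_of_le hy huv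
  have hqB : ∀ k, qball d x (2 ^ k * r) ⊆ B k := by
    intro k
    refine Set.subset_iInter fun j => ?_
    refine (hqball_mono ?_).trans (hqT (k + j))
    have : (2:ℝ) ^ k ≤ 2 ^ (k + j) := by
      apply pow_le_pow_right₀ one_le_two (Nat.le_add_right k j)
    nlinarith
  have hBmeas : ∀ k, MeasurableSet (B k) := fun k =>
    MeasurableSet.iInter fun j => measurableSet_toMeasurable μ _
  have hBle : ∀ k, μ (B k) ≤ μ (qball d x (2 ^ k * r)) := by
    intro k
    calc μ (B k) ≤ μ (T (k + 0)) := measure_mono (Set.iInter_subset _ 0)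
      _ = μ (qball d x (2 ^ (k + 0) * r)) := measure_toMeasurable _
      _ = μ (qball d x (2 ^ k * r)) := by norm_num
  have hBnot : ∀ k y, y ∉ B k → 2 ^ k * r ≤ d x y := by
    intro k y hy
    by_contra h
    exact hy (hqB k (lt_of_not_ge h))
  -- covering
  have hcover : (Set.univ : Set X) ⊆ B 0 ∪ ⋃ k, (B (k + 1) \ B k) := by
    intro y _
    have hex : ∃ k, y ∈ B k := by
      obtain ⟨n, hn⟩ := pow_unbounded_of_one_lt (d x y / r) (one_lt_two (α := ℝ))
      refine ⟨n, hqB n ?_⟩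
      show d x y < 2 ^ n * r
      rw [div_lt_iff₀ hr] at hn; linarith
    classical
    let k := Nat.find hex
    have hk : y ∈ B k := Nat.find_spec hex
    rcases Nat.eq_zero_or_pos k with hk0 | hkpos
    · left; rwa [hk0] at hk
    · right
      refine Set.mem_iUnion.2 ⟨k - 1, ?_, Nat.find_min hex (by omega)⟩
      have hkk : k - 1 + 1 = k := by omega
      rwa [hkk]
  -- bound on B 0
  have hB0 : ∫⁻ y in B 0, H y ∂μ ≤ 1 := by
    have hHle : ∀ y ∈ B 0, H y ≤ ENNReal.ofReal Vr⁻¹ := by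
      intro y _
      apply ENNReal.ofReal_le_ofReal
      have ht0 : 0 ≤ d x y := hd_nonneg x y
      have h1 : ((Vr + (μ (qball d x (d x y))).toReal)⁻¹ : ℝ) ≤ Vr⁻¹ := by
        apply inv_anti₀ hVr0
        have : (0:ℝ) ≤ (μ (qball d x (d x y))).toReal := ENNReal.toReal_nonneg
        linarith
      have h2 : (r / (r + d x y)) ^ ε ≤ 1 := by
        apply Real.rpow_le_one (by positivity) ?_ hε0.le
        rw [div_le_one (by linarith)]; linarith
      calc (Vr + (μ (qball d x (d x y))).toReal)⁻¹ * (r / (r + d x y)) ^ ε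
          ≤ Vr⁻¹ * 1 := by
            apply mul_le_mul h1 h2 (by positivity) (by positivity)
        _ = Vr⁻¹ := mul_one _
    calc ∫⁻ y in B 0, H y ∂μ ≤ ∫⁻ _ in B 0, ENNReal.ofReal Vr⁻¹ ∂μ :=
          setLIntegral_mono measurable_const hHle
      _ = ENNReal.ofReal Vr⁻¹ * μ (B 0) := setLIntegral_const _ _
      _ ≤ ENNReal.ofReal Vr⁻¹ * μ (qball d x r) := by
          apply mul_le_mul_right
          have := hBle 0; simpa using this
      _ = ENNReal.ofReal Vr⁻¹ * ENNReal.ofReal Vr := by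
          rw [hVrdef, ENNReal.ofReal_toReal (hfin x r).ne]
      _ = ENNReal.ofReal (Vr⁻¹ * Vr) := (ENNReal.ofReal_mul (by positivity)).symm
      _ = 1 := by rw [inv_mul_cancel₀ hVr0.ne', ENNReal.ofReal_one]
  -- bound on annuli
  have hAnn : ∀ k : ℕ, ∫⁻ y in B (k + 1) \ B k, H y ∂μ ≤
      ENNReal.ofReal Cμ * ENNReal.ofReal q ^ k := by
    intro k
    set Vk : ℝ := (μ (qball d x (2 ^ k * r))).toReal with hVkdef
    have hVk0 : 0 < Vk := ENNReal.toReal_pos (hpos x _ (by positivity)).ne' (hfin x _).ne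
    have hHle : ∀ y ∈ B (k + 1) \ B k, H y ≤ ENNReal.ofReal (Vk⁻¹ * q ^ k) := by
      rintro y ⟨-, hyk⟩
      have htk : 2 ^ k * r ≤ d x y := hBnot k y hyk
      have ht0 : 0 ≤ d x y := hd_nonneg x y
      apply ENNReal.ofReal_le_ofReal
      have h1 : ((Vr + (μ (qball d x (d x y))).toReal)⁻¹ : ℝ) ≤ Vk⁻¹ := by
        apply inv_anti₀ hVk0
        have hsub : qball d x (2 ^ k * r) ⊆ qball d x (d x y) := hqball_mono htk
        have : Vk ≤ (μ (qball d x (d x y))).toReal :=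
          ENNReal.toReal_mono (hfin x _).ne (measure_mono hsub)
        linarith
      have h2 : (r / (r + d x y)) ^ ε ≤ q ^ k := by
        have hb : r / (r + d x y) ≤ ((2:ℝ) ^ k)⁻¹ := by
          rw [div_le_iff₀ (by linarith), inv_mul_eq_div, le_div_iff₀ (by positivity)]
          nlinarith
        have h3 : (((2:ℝ) ^ k)⁻¹) ^ ε = q ^ k := by
          rw [← Real.rpow_natCast (2:ℝ) k, ← Real.rpow_neg (by norm_num),
            ← Real.rpow_natCast q k, hqdef, ← Real.rpow_mul (by norm_num),
            ← Real.rpow_mul (by norm_num)]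
          ring_nf
        have h4 : (r / (r + d x y)) ^ ε ≤ (((2:ℝ) ^ k)⁻¹) ^ ε :=
          Real.rpow_le_rpow (by positivity) hb hε0.le
        linarith [h3 ▸ h4]
      have h5 : (Vr + (μ (qball d x (d x y))).toReal)⁻¹ * (r / (r + d x y)) ^ ε
          ≤ Vk⁻¹ * q ^ k :=
        mul_le_mul h1 h2 (by positivity) (by positivity)
      exact h5
    have hmeas : μ (B (k + 1) \ B k) ≤ ENNReal.ofReal Cμ * ENNReal.ofReal Vk := by
      have e1 : μ (B (k + 1) \ B k) ≤ μ (B (k + 1)) := measure_mono Set.diff_subset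
      have e2 : μ (B (k + 1)) ≤ μ (qball d x (2 ^ (k + 1) * r)) := hBle (k + 1)
      have e3 : (2:ℝ) ^ (k + 1) * r = 2 * (2 ^ k * r) := by ring
      have e4 : μ (qball d x (2 ^ (k + 1) * r)) ≤ ENNReal.ofReal Cμ * μ (qball d x (2 ^ k * r)) := by
        rw [e3]; exact hdoub x _
      have e5 : μ (qball d x (2 ^ k * r)) = ENNReal.ofReal Vk := by
        rw [hVkdef, ENNReal.ofReal_toReal (hfin x _).ne]
      calc μ (B (k + 1) \ B k) ≤ μ (qball d x (2 ^ (k + 1) * r)) := e1.trans e2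
        _ ≤ ENNReal.ofReal Cμ * μ (qball d x (2 ^ k * r)) := e4
        _ = ENNReal.ofReal Cμ * ENNReal.ofReal Vk := by rw [e5]
    have e6 : ENNReal.ofReal (Vk⁻¹ * q ^ k) * (ENNReal.ofReal Cμ * ENNReal.ofReal Vk)
        = ENNReal.ofReal Cμ * ENNReal.ofReal q ^ k := by
      rw [← ENNReal.ofReal_mul (by positivity), ← ENNReal.ofReal_mul (by positivity),
        ← ENNReal.ofReal_pow hq0.le, ← ENNReal.ofReal_mul (by linarith)]
      congr 1
      field_simp
    calc ∫⁻ y in B (k + 1) \ B k, H y ∂μ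
        ≤ ∫⁻ _ in B (k + 1) \ B k, ENNReal.ofReal (Vk⁻¹ * q ^ k) ∂μ :=
          setLIntegral_mono measurable_const hHle
      _ = ENNReal.ofReal (Vk⁻¹ * q ^ k) * μ (B (k + 1) \ B k) := setLIntegral_const _ _
      _ ≤ ENNReal.ofReal (Vk⁻¹ * q ^ k) * (ENNReal.ofReal Cμ * ENNReal.ofReal Vk) :=
          mul_le_mul_right hmeas _
      _ = ENNReal.ofReal Cμ * ENNReal.ofReal q ^ k := e6
  -- assemble the lintegral bound on H
  have hHint : ∫⁻ y, H y ∂μ ≤ ENNReal.ofReal (1 + Cμ * (1 - q)⁻¹) := by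
    have h1 : ∫⁻ y, H y ∂μ = ∫⁻ y in Set.univ, H y ∂μ := by
      rw [Measure.restrict_univ]
    rw [h1]
    calc ∫⁻ y in Set.univ, H y ∂μ
        ≤ ∫⁻ y in B 0 ∪ ⋃ k, (B (k + 1) \ B k), H y ∂μ :=
          lintegral_mono_set hcover
      _ ≤ (∫⁻ y in B 0, H y ∂μ) + ∫⁻ y in ⋃ k, (B (k + 1) \ B k), H y ∂μ :=
          lintegral_union_le _ _ _
      _ ≤ 1 + ∑' k : ℕ, ∫⁻ y in B (k + 1) \ B k, H y ∂μ :=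
          add_le_add hB0 (lintegral_iUnion_le _ _)
      _ ≤ 1 + ∑' k : ℕ, ENNReal.ofReal Cμ * ENNReal.ofReal q ^ k :=
          add_le_add_right (ENNReal.tsum_le_tsum hAnn) 1
      _ = 1 + ENNReal.ofReal Cμ * (1 - ENNReal.ofReal q)⁻¹ := by
          rw [ENNReal.tsum_mul_left, ENNReal.tsum_geometric]
      _ = ENNReal.ofReal (1 + Cμ * (1 - q)⁻¹) := by
          rw [ENNReal.ofReal_add (by norm_num)
              (mul_nonneg (by linarith) (inv_pos.2 (by linarith : (0:ℝ) < 1 - q)).le),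
            ENNReal.ofReal_one, ENNReal.ofReal_mul (by linarith),
            ENNReal.ofReal_inv_of_pos (by linarith),
            ENNReal.ofReal_sub 1 hq0.le, ENNReal.ofReal_one]
  -- finish
  have hfinal : ∫⁻ y, ENNReal.ofReal ‖K x y * (f y - f x)‖ ∂μ ≤
      ENNReal.ofReal ((1 + Cμ * (1 - q)⁻¹) * L * r ^ s) := by
    calc ∫⁻ y, ENNReal.ofReal ‖K x y * (f y - f x)‖ ∂μ
        ≤ ∫⁻ y, ENNReal.ofReal (L * r ^ s) * H y ∂μ := lintegral_mono hpt
      _ = ENNReal.ofReal (L * r ^ s) * ∫⁻ y, H y ∂μ :=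
          lintegral_const_mul' _ _ ENNReal.ofReal_ne_top
      _ ≤ ENNReal.ofReal (L * r ^ s) * ENNReal.ofReal (1 + Cμ * (1 - q)⁻¹) :=
          mul_le_mul_right hHint _
      _ = ENNReal.ofReal ((1 + Cμ * (1 - q)⁻¹) * L * r ^ s) := by
          rw [← ENNReal.ofReal_mul (by positivity)]
          ring_nf
  calc ‖∫ y, K x y * (f y - f x) ∂μ‖
      ≤ (∫⁻ y, ENNReal.ofReal ‖K x y * (f y - f x)‖ ∂μ).toReal :=
        norm_integral_le_lintegral_norm _
    _ ≤ (1 + Cμ * (1 - q)⁻¹) * L * r ^ s :=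
        ENNReal.toReal_le_of_le_ofReal
          (mul_nonneg (mul_nonneg hCpos.le hL) (Real.rpow_nonneg hr.le _)) hfinal
end

section
/- (Cotlar–Stein lemma) Let H be a Hilbert space and (T_k)_{k=1}^N bounded linear operators on H. Suppose there is a sequence (a(j))_{j∈ℤ} of nonnegative numbers with A := ∑_{j∈ℤ} √(a(j)) < ∞ such that for all k, l, ‖T_k T_l^*‖ ≤ a(k−l) and ‖T_k^* T_l‖ ≤ a(k−l). Then ‖∑_{k=1}^N T_k‖ ≤ A. -/
open ContinuousLinearMap

private lemma cs_sum_pow {R : Type*} [Semiring R] {ι : Type*} [Fintype ι] (f : ι → R) :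
    ∀ n : ℕ, (∑ i, f i) ^ n = ∑ g : Fin n → ι, (List.ofFn fun i => f (g i)).prod
  | 0 => by simp
  | (n + 1) => by
    rw [pow_succ', cs_sum_pow f n, Finset.mul_sum]
    rw [← Fintype.sum_equiv (Fin.consEquiv (fun _ : Fin (n+1) => ι))
        (fun pg => (List.ofFn fun i => f ((Fin.cons pg.1 pg.2 : Fin (n+1) → ι) i)).prod)
        (fun g : Fin (n+1) → ι => (List.ofFn fun i => f (g i)).prod) (fun pg => rfl)]
    rw [Fintype.sum_prod_type, Finset.sum_comm]
    refine Finset.sum_congr rfl fun g _ => ?_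
    rw [Finset.sum_mul]
    refine Finset.sum_congr rfl fun x _ => ?_
    simp [List.ofFn_succ, Fin.cons_zero, Fin.cons_succ]

private lemma cs_norm_pow_two_pow {E : Type*} [NormedRing E] [StarRing E] [CStarRing E]
    (b : E) (hb : IsSelfAdjoint b) : ∀ k : ℕ, ‖b ^ 2 ^ k‖ = ‖b‖ ^ 2 ^ k
  | 0 => by simp
  | (k + 1) => by
    have hc : IsSelfAdjoint (b ^ 2 ^ k) := hb.pow _
    have h : ‖(b ^ 2 ^ k) * (b ^ 2 ^ k)‖ = ‖b ^ 2 ^ k‖ * ‖b ^ 2 ^ k‖ := by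
      nth_rewrite 1 [← hc.star_eq]
      exact CStarRing.norm_star_mul_self (x := b ^ 2 ^ k)
    rw [pow_succ, pow_mul, sq, h, cs_norm_pow_two_pow b hb k, pow_mul, sq]

private def csB {N : ℕ} (a : ℤ → ℝ) : List (Fin N × Fin N) → ℝ
  | [] => 1
  | p :: L => a (((p.1 : ℕ) : ℤ) - ((p.2 : ℕ) : ℤ)) * csB a L

private def csC {N : ℕ} (a : ℤ → ℝ) : Fin N → List (Fin N × Fin N) → ℝ
  | _, [] => 1
  | l, p :: L => a (((l : ℕ) : ℤ) - ((p.1 : ℕ) : ℤ)) * csC a p.2 L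

private noncomputable def csD {N : ℕ} (a : ℤ → ℝ) : Fin N → List (Fin N × Fin N) → ℝ
  | _, [] => 1
  | l, p :: L => Real.sqrt (a (((l : ℕ) : ℤ) - ((p.1 : ℕ) : ℤ))) *
      (Real.sqrt (a (((p.1 : ℕ) : ℤ) - ((p.2 : ℕ) : ℤ))) * csD a p.2 L)

private lemma csD_nil {N : ℕ} (a : ℤ → ℝ) (l : Fin N) : csD a l [] = 1 := rfl

private lemma csD_cons {N : ℕ} (a : ℤ → ℝ) (l : Fin N) (p : Fin N × Fin N)
    (L : List (Fin N × Fin N)) :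
    csD a l (p :: L) = Real.sqrt (a (((l : ℕ) : ℤ) - ((p.1 : ℕ) : ℤ))) *
      (Real.sqrt (a (((p.1 : ℕ) : ℤ) - ((p.2 : ℕ) : ℤ))) * csD a p.2 L) := rfl

private lemma csB_nonneg {N : ℕ} (a : ℤ → ℝ) (ha : ∀ j, 0 ≤ a j) :
    ∀ L : List (Fin N × Fin N), 0 ≤ csB a L
  | [] => zero_le_one
  | p :: L => mul_nonneg (ha _) (csB_nonneg a ha L)

private lemma csC_nonneg {N : ℕ} (a : ℤ → ℝ) (ha : ∀ j, 0 ≤ a j) :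
    ∀ (L : List (Fin N × Fin N)) (l : Fin N), 0 ≤ csC a l L
  | [], _ => zero_le_one
  | p :: L, l => mul_nonneg (ha _) (csC_nonneg a ha L p.2)

private lemma csD_nonneg {N : ℕ} (a : ℤ → ℝ) :
    ∀ (L : List (Fin N × Fin N)) (l : Fin N), 0 ≤ csD a l L
  | [], _ => zero_le_one
  | p :: L, l => by
    rw [csD_cons]
    exact mul_nonneg (Real.sqrt_nonneg _)
      (mul_nonneg (Real.sqrt_nonneg _) (csD_nonneg a L p.2))

private lemma csBCD {N : ℕ} (a : ℤ → ℝ) (ha : ∀ j, 0 ≤ a j) :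
    ∀ (L : List (Fin N × Fin N)) (l : Fin N),
      Real.sqrt (csB a L * csC a l L) = csD a l L
  | [], l => by rw [csD_nil]; simp [csB, csC]
  | p :: L, l => by
    have h1 : csB a (p :: L) * csC a l (p :: L)
        = a (((l : ℕ) : ℤ) - ((p.1 : ℕ) : ℤ)) *
          (a (((p.1 : ℕ) : ℤ) - ((p.2 : ℕ) : ℤ)) * (csB a L * csC a p.2 L)) := by
      simp only [csB, csC]; ring
    rw [csD_cons, h1, Real.sqrt_mul (ha _), Real.sqrt_mul (ha _), csBCD a ha L p.2]

section Op

variable {H : Type*} [NormedAddCommGroup H] [InnerProductSpace ℂ H] [CompleteSpace H]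
variable {N : ℕ}

private noncomputable def csQ (T : Fin N → H →L[ℂ] H) : Fin N → List (Fin N × Fin N) → H →L[ℂ] H
  | l, [] => star (T l)
  | l, p :: L => (star (T l) * T p.1) * csQ T p.2 L

private lemma csQ_nil (T : Fin N → H →L[ℂ] H) (l : Fin N) : csQ T l [] = star (T l) := rfl

private lemma csQ_cons (T : Fin N → H →L[ℂ] H) (l : Fin N) (p : Fin N × Fin N)
    (L : List (Fin N × Fin N)) :
    csQ T l (p :: L) = (star (T l) * T p.1) * csQ T p.2 L := rfl

private lemma cs_prod_eq (T : Fin N → H →L[ℂ] H) :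
    ∀ (L : List (Fin N × Fin N)) (k l : Fin N),
      (((k, l) :: L).map fun p => T p.1 * star (T p.2)).prod = T k * csQ T l L
  | [], k, l => by simp [csQ_nil]
  | p :: L, k, l => by
    have ih := cs_prod_eq T L p.1 p.2
    simp only [List.map_cons, List.prod_cons] at ih ⊢
    rw [ih, csQ_cons]
    simp [mul_assoc]

private lemma cs_normQ (T : Fin N → H →L[ℂ] H) (a : ℤ → ℝ) (ha : ∀ j, 0 ≤ a j)
    (hT : ∀ l, ‖T l‖ ≤ Real.sqrt (a 0))
    (h₂' : ∀ k l : Fin N, ‖star (T k) * T l‖ ≤ a (((k : ℕ) : ℤ) - ((l : ℕ) : ℤ))) :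
    ∀ (L : List (Fin N × Fin N)) (l : Fin N), ‖csQ T l L‖ ≤ Real.sqrt (a 0) * csC a l L
  | [], l => by
    rw [csQ_nil, norm_star]
    simpa [csC] using hT l
  | p :: L, l => by
    rw [csQ_cons]
    calc ‖(star (T l) * T p.1) * csQ T p.2 L‖
        ≤ ‖star (T l) * T p.1‖ * ‖csQ T p.2 L‖ := norm_mul_le _ _
      _ ≤ a (((l : ℕ) : ℤ) - ((p.1 : ℕ) : ℤ)) * (Real.sqrt (a 0) * csC a p.2 L) :=
          mul_le_mul (h₂' l p.1) (cs_normQ T a ha hT h₂' L p.2) (norm_nonneg _) (ha _)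
      _ = Real.sqrt (a 0) * csC a l (p :: L) := by simp only [csC]; ring

private lemma cs_normP (T : Fin N → H →L[ℂ] H) (a : ℤ → ℝ) (ha : ∀ j, 0 ≤ a j)
    (h₁' : ∀ k l : Fin N, ‖T k * star (T l)‖ ≤ a (((k : ℕ) : ℤ) - ((l : ℕ) : ℤ))) :
    ∀ L : List (Fin N × Fin N), ‖(L.map fun p => T p.1 * star (T p.2)).prod‖ ≤ csB a L
  | [] => by
    simp only [List.map_nil, List.prod_nil, csB]
    rw [ContinuousLinearMap.one_def]
    exact ContinuousLinearMap.norm_id_le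
  | p :: L => by
    simp only [List.map_cons, List.prod_cons, csB]
    calc ‖(T p.1 * star (T p.2)) * (L.map fun p => T p.1 * star (T p.2)).prod‖
        ≤ ‖T p.1 * star (T p.2)‖ * ‖(L.map fun p => T p.1 * star (T p.2)).prod‖ :=
          norm_mul_le _ _
      _ ≤ a (((p.1 : ℕ) : ℤ) - ((p.2 : ℕ) : ℤ)) * csB a L :=
          mul_le_mul (h₁' p.1 p.2) (cs_normP T a ha h₁' L) (norm_nonneg _) (ha _)

private lemma cs_term (T : Fin N → H →L[ℂ] H) (a : ℤ → ℝ) (ha : ∀ j, 0 ≤ a j)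
    (hT : ∀ l, ‖T l‖ ≤ Real.sqrt (a 0))
    (h₁' : ∀ k l : Fin N, ‖T k * star (T l)‖ ≤ a (((k : ℕ) : ℤ) - ((l : ℕ) : ℤ)))
    (h₂' : ∀ k l : Fin N, ‖star (T k) * T l‖ ≤ a (((k : ℕ) : ℤ) - ((l : ℕ) : ℤ)))
    (L : List (Fin N × Fin N)) (k l : Fin N) :
    ‖(((k, l) :: L).map fun p => T p.1 * star (T p.2)).prod‖ ≤
      Real.sqrt (a 0) * (Real.sqrt (a (((k : ℕ) : ℤ) - ((l : ℕ) : ℤ))) * csD a l L) := by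
  set x := ‖(((k, l) :: L).map fun p => T p.1 * star (T p.2)).prod‖ with hx
  have hx0 : 0 ≤ x := norm_nonneg _
  have hb1 : x ≤ csB a ((k, l) :: L) := cs_normP T a ha h₁' _
  have hb2 : x ≤ a 0 * csC a l L := by
    rw [hx, cs_prod_eq T L k l]
    calc ‖T k * csQ T l L‖ ≤ ‖T k‖ * ‖csQ T l L‖ := norm_mul_le _ _
      _ ≤ Real.sqrt (a 0) * (Real.sqrt (a 0) * csC a l L) :=
          mul_le_mul (hT k) (cs_normQ T a ha hT h₂' L l) (norm_nonneg _) (Real.sqrt_nonneg _)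
      _ = a 0 * csC a l L := by
          rw [← mul_assoc, Real.mul_self_sqrt (ha 0)]
  have hxx : x * x ≤ csB a ((k, l) :: L) * (a 0 * csC a l L) :=
    mul_le_mul hb1 hb2 hx0 (csB_nonneg a ha _)
  have : x ≤ Real.sqrt (csB a ((k, l) :: L) * (a 0 * csC a l L)) := by
    rw [← Real.sqrt_mul_self hx0]
    exact Real.sqrt_le_sqrt hxx
  refine this.trans (le_of_eq ?_)
  have hrw : csB a ((k, l) :: L) * (a 0 * csC a l L)
      = a 0 * (a (((k : ℕ) : ℤ) - ((l : ℕ) : ℤ)) * (csB a L * csC a l L)) := by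
    simp only [csB]; ring
  rw [hrw, Real.sqrt_mul (ha 0), Real.sqrt_mul (ha _), csBCD a ha L l]

end Op

private lemma cs_row {N : ℕ} (a : ℤ → ℝ) (ha : ∀ j, 0 ≤ a j)
    (hsum : Summable fun j : ℤ => Real.sqrt (a j)) (z : ℤ) :
    ∑ l : Fin N, Real.sqrt (a (z - ((l : ℕ) : ℤ))) ≤ ∑' j : ℤ, Real.sqrt (a j) := by
  have hinj : ∀ x ∈ (Finset.univ : Finset (Fin N)), ∀ y ∈ (Finset.univ : Finset (Fin N)),
      z - ((x : ℕ) : ℤ) = z - ((y : ℕ) : ℤ) → x = y := by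
    intro x _ y _ h
    have : (x : ℕ) = (y : ℕ) := by omega
    exact Fin.ext this
  refine le_trans (le_of_eq (Finset.sum_image (g := fun l : Fin N => z - ((l : ℕ) : ℤ))
      (f := fun j => Real.sqrt (a j)) hinj).symm) ?_
  exact Summable.sum_le_tsum (Finset.univ.image fun l : Fin N => z - ((l : ℕ) : ℤ))
    (fun j _ => Real.sqrt_nonneg _) hsum

private lemma cs_chain {N : ℕ} (a : ℤ → ℝ) (ha : ∀ j, 0 ≤ a j)
    (hsum : Summable fun j : ℤ => Real.sqrt (a j)) :
    ∀ (m : ℕ) (l : Fin N),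
      ∑ g : Fin m → Fin N × Fin N, csD a l (List.ofFn g) ≤
        ((∑' j : ℤ, Real.sqrt (a j)) * (∑' j : ℤ, Real.sqrt (a j))) ^ m
  | 0, l => by simp [csD_nil]
  | (m + 1), l => by
    have hA0 : 0 ≤ ∑' j : ℤ, Real.sqrt (a j) := tsum_nonneg fun j => Real.sqrt_nonneg _
    set A := ∑' j : ℤ, Real.sqrt (a j) with hA
    rw [← Fintype.sum_equiv (Fin.consEquiv (fun _ : Fin (m+1) => Fin N × Fin N))
        (fun pg => csD a l (List.ofFn (Fin.cons pg.1 pg.2)))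
        (fun g : Fin (m+1) → Fin N × Fin N => csD a l (List.ofFn g)) (fun pg => rfl)]
    rw [Fintype.sum_prod_type]
    have hofn : ∀ (p : Fin N × Fin N) (g : Fin m → Fin N × Fin N),
        List.ofFn (Fin.cons p g : Fin (m+1) → Fin N × Fin N) = p :: List.ofFn g := by
      intro p g
      simp [List.ofFn_succ, Fin.cons_zero, Fin.cons_succ]
    calc ∑ p : Fin N × Fin N, ∑ g : Fin m → Fin N × Fin N, csD a l (List.ofFn (Fin.cons p g))
        = ∑ p : Fin N × Fin N,
            (Real.sqrt (a (((l : ℕ) : ℤ) - ((p.1 : ℕ) : ℤ))) *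
              Real.sqrt (a (((p.1 : ℕ) : ℤ) - ((p.2 : ℕ) : ℤ)))) *
            ∑ g : Fin m → Fin N × Fin N, csD a p.2 (List.ofFn g) := by
          refine Finset.sum_congr rfl fun p _ => ?_
          rw [Finset.mul_sum]
          refine Finset.sum_congr rfl fun g _ => ?_
          rw [hofn, csD_cons, mul_assoc]
      _ ≤ ∑ p : Fin N × Fin N,
            (Real.sqrt (a (((l : ℕ) : ℤ) - ((p.1 : ℕ) : ℤ))) *
              Real.sqrt (a (((p.1 : ℕ) : ℤ) - ((p.2 : ℕ) : ℤ)))) * (A * A) ^ m := by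
          refine Finset.sum_le_sum fun p _ => ?_
          exact mul_le_mul_of_nonneg_left (cs_chain a ha hsum m p.2)
            (mul_nonneg (Real.sqrt_nonneg _) (Real.sqrt_nonneg _))
      _ = (∑ p : Fin N × Fin N,
            Real.sqrt (a (((l : ℕ) : ℤ) - ((p.1 : ℕ) : ℤ))) *
              Real.sqrt (a (((p.1 : ℕ) : ℤ) - ((p.2 : ℕ) : ℤ)))) * (A * A) ^ m := by
          rw [Finset.sum_mul]
      _ ≤ (A * A) * (A * A) ^ m := by
          refine mul_le_mul_of_nonneg_right ?_ (pow_nonneg (mul_nonneg hA0 hA0) m)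
          rw [Fintype.sum_prod_type]
          calc ∑ k' : Fin N, ∑ l' : Fin N,
                Real.sqrt (a (((l : ℕ) : ℤ) - ((k' : ℕ) : ℤ))) *
                  Real.sqrt (a (((k' : ℕ) : ℤ) - ((l' : ℕ) : ℤ)))
              = ∑ k' : Fin N, Real.sqrt (a (((l : ℕ) : ℤ) - ((k' : ℕ) : ℤ))) *
                  ∑ l' : Fin N, Real.sqrt (a (((k' : ℕ) : ℤ) - ((l' : ℕ) : ℤ))) := by
                refine Finset.sum_congr rfl fun k' _ => ?_
                rw [Finset.mul_sum]
            _ ≤ ∑ k' : Fin N, Real.sqrt (a (((l : ℕ) : ℤ) - ((k' : ℕ) : ℤ))) * A := by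
                refine Finset.sum_le_sum fun k' _ => ?_
                exact mul_le_mul_of_nonneg_left (cs_row a ha hsum _) (Real.sqrt_nonneg _)
            _ = (∑ k' : Fin N, Real.sqrt (a (((l : ℕ) : ℤ) - ((k' : ℕ) : ℤ)))) * A := by
                rw [Finset.sum_mul]
            _ ≤ A * A := mul_le_mul_of_nonneg_right (cs_row a ha hsum _) hA0
      _ = (A * A) ^ (m + 1) := (pow_succ' _ _).symm

/-- Cotlar–Stein lemma: if `(T_k)_{k=1}^N` are bounded operators on a Hilbert space with
`‖T_k T_l^*‖ ≤ a(k−l)` and `‖T_k^* T_l‖ ≤ a(k−l)` for a nonnegative sequence `a` with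
`A = ∑_j √a(j) < ∞`, then `‖∑_k T_k‖ ≤ A`. -/
theorem stmt_17 {H : Type*} [NormedAddCommGroup H] [InnerProductSpace ℂ H] [CompleteSpace H]
    (N : ℕ) (T : Fin N → H →L[ℂ] H) (a : ℤ → ℝ) (ha : ∀ j, 0 ≤ a j)
    (hsum : Summable fun j : ℤ => Real.sqrt (a j))
    (h₁ : ∀ k l : Fin N, ‖T k ∘L adjoint (T l)‖ ≤ a (((k : ℕ) : ℤ) - ((l : ℕ) : ℤ)))
    (h₂ : ∀ k l : Fin N, ‖adjoint (T k) ∘L T l‖ ≤ a (((k : ℕ) : ℤ) - ((l : ℕ) : ℤ))) :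
    ‖∑ k, T k‖ ≤ ∑' j : ℤ, Real.sqrt (a j) := by
  have hA0 : 0 ≤ ∑' j : ℤ, Real.sqrt (a j) := tsum_nonneg fun j => Real.sqrt_nonneg _
  set A := ∑' j : ℤ, Real.sqrt (a j) with hA
  have h₁' : ∀ k l : Fin N, ‖T k * star (T l)‖ ≤ a (((k : ℕ) : ℤ) - ((l : ℕ) : ℤ)) := by
    intro k l
    rw [ContinuousLinearMap.mul_def, star_eq_adjoint]
    exact h₁ k l
  have h₂' : ∀ k l : Fin N, ‖star (T k) * T l‖ ≤ a (((k : ℕ) : ℤ) - ((l : ℕ) : ℤ)) := by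
    intro k l
    rw [ContinuousLinearMap.mul_def, star_eq_adjoint]
    exact h₂ k l
  have hT : ∀ l : Fin N, ‖T l‖ ≤ Real.sqrt (a 0) := by
    intro l
    have h0 : ‖T l * star (T l)‖ = ‖T l‖ * ‖T l‖ := CStarRing.norm_self_mul_star
    have h1 := h₁' l l
    rw [sub_self, h0] at h1
    calc ‖T l‖ = Real.sqrt (‖T l‖ * ‖T l‖) := (Real.sqrt_mul_self (norm_nonneg _)).symm
      _ ≤ Real.sqrt (a 0) := Real.sqrt_le_sqrt h1
  have hsqa0 : Real.sqrt (a 0) ≤ A := Summable.le_tsum hsum 0 fun j _ => Real.sqrt_nonneg _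
  set S := ∑ k, T k with hS
  have hBexp : S * star S = ∑ p : Fin N × Fin N, T p.1 * star (T p.2) := by
    calc S * star S = (∑ k, T k) * ∑ l, star (T l) := by rw [hS, star_sum]
      _ = ∑ k, ∑ l, T k * star (T l) := Finset.sum_mul_sum _ _ _ _
      _ = ∑ p : Fin N × Fin N, T p.1 * star (T p.2) := by rw [Fintype.sum_prod_type]
  have hBsa : IsSelfAdjoint (S * star S) := IsSelfAdjoint.mul_star_self S
  have hBnorm : ‖S * star S‖ = ‖S‖ * ‖S‖ := CStarRing.norm_self_mul_star
  have hrowN : ∑ p : Fin N × Fin N, Real.sqrt (a (((p.1 : ℕ) : ℤ) - ((p.2 : ℕ) : ℤ)))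
      ≤ (N : ℝ) * A := by
    rw [Fintype.sum_prod_type]
    calc ∑ k : Fin N, ∑ l : Fin N, Real.sqrt (a (((k : ℕ) : ℤ) - ((l : ℕ) : ℤ)))
        ≤ ∑ _k : Fin N, A := Finset.sum_le_sum fun k _ => cs_row a ha hsum _
      _ = (N : ℝ) * A := by simp [Finset.sum_const, Finset.card_univ]
  have hpow : ∀ m : ℕ, ‖(S * star S) ^ (m + 1)‖ ≤
      Real.sqrt (a 0) * (((N : ℝ) * A) * (A * A) ^ m) := by
    intro m
    rw [hBexp, cs_sum_pow (fun p : Fin N × Fin N => T p.1 * star (T p.2)) (m + 1)]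
    refine le_trans (norm_sum_le _ _) ?_
    rw [← Fintype.sum_equiv (Fin.consEquiv (fun _ : Fin (m+1) => Fin N × Fin N))
        (fun pg => ‖(List.ofFn fun i =>
          (fun p : Fin N × Fin N => T p.1 * star (T p.2))
            ((Fin.cons pg.1 pg.2 : Fin (m+1) → Fin N × Fin N) i)).prod‖)
        (fun g : Fin (m+1) → Fin N × Fin N => ‖(List.ofFn fun i =>
          (fun p : Fin N × Fin N => T p.1 * star (T p.2)) (g i)).prod‖)
        (fun pg => rfl)]
    rw [Fintype.sum_prod_type]
    have hterm : ∀ (p : Fin N × Fin N) (g : Fin m → Fin N × Fin N),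
        ‖(List.ofFn fun i => (fun p : Fin N × Fin N => T p.1 * star (T p.2))
            ((Fin.cons p g : Fin (m+1) → Fin N × Fin N) i)).prod‖ ≤
          Real.sqrt (a 0) * (Real.sqrt (a (((p.1 : ℕ) : ℤ) - ((p.2 : ℕ) : ℤ))) *
            csD a p.2 (List.ofFn g)) := by
      intro p g
      have hl : (List.ofFn fun i => (fun p : Fin N × Fin N => T p.1 * star (T p.2))
            ((Fin.cons p g : Fin (m+1) → Fin N × Fin N) i)) =
          ((p.1, p.2) :: List.ofFn g).map fun p : Fin N × Fin N => T p.1 * star (T p.2) := by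
        simp [List.map_ofFn, List.ofFn_succ, Fin.cons_zero, Fin.cons_succ, Function.comp_def]
      rw [hl]
      exact cs_term T a ha hT h₁' h₂' (List.ofFn g) p.1 p.2
    calc ∑ p : Fin N × Fin N, ∑ g : Fin m → Fin N × Fin N,
          ‖(List.ofFn fun i => (fun p : Fin N × Fin N => T p.1 * star (T p.2))
            ((Fin.cons p g : Fin (m+1) → Fin N × Fin N) i)).prod‖
        ≤ ∑ p : Fin N × Fin N, ∑ g : Fin m → Fin N × Fin N,
          Real.sqrt (a 0) * (Real.sqrt (a (((p.1 : ℕ) : ℤ) - ((p.2 : ℕ) : ℤ))) *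
            csD a p.2 (List.ofFn g)) :=
          Finset.sum_le_sum fun p _ => Finset.sum_le_sum fun g _ => hterm p g
      _ = ∑ p : Fin N × Fin N,
          (Real.sqrt (a 0) * Real.sqrt (a (((p.1 : ℕ) : ℤ) - ((p.2 : ℕ) : ℤ)))) *
          ∑ g : Fin m → Fin N × Fin N, csD a p.2 (List.ofFn g) := by
          refine Finset.sum_congr rfl fun p _ => ?_
          rw [Finset.mul_sum]
          exact Finset.sum_congr rfl fun g _ => by rw [mul_assoc]
      _ ≤ ∑ p : Fin N × Fin N,
          (Real.sqrt (a 0) * Real.sqrt (a (((p.1 : ℕ) : ℤ) - ((p.2 : ℕ) : ℤ)))) *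
            (A * A) ^ m := by
          refine Finset.sum_le_sum fun p _ => ?_
          exact mul_le_mul_of_nonneg_left (cs_chain a ha hsum m p.2)
            (mul_nonneg (Real.sqrt_nonneg _) (Real.sqrt_nonneg _))
      _ = (Real.sqrt (a 0) *
            ∑ p : Fin N × Fin N, Real.sqrt (a (((p.1 : ℕ) : ℤ) - ((p.2 : ℕ) : ℤ)))) *
            (A * A) ^ m := by
          rw [Finset.mul_sum, Finset.sum_mul]
      _ ≤ Real.sqrt (a 0) * (((N : ℝ) * A) * (A * A) ^ m) := by
          rw [← mul_assoc]
          exact mul_le_mul_of_nonneg_right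
            (mul_le_mul_of_nonneg_left hrowN (Real.sqrt_nonneg _))
            (pow_nonneg (mul_nonneg hA0 hA0) m)
  have key : ∀ kk : ℕ, (‖S‖ * ‖S‖) ^ 2 ^ kk ≤ (N : ℝ) * (A * A) ^ 2 ^ kk := by
    intro kk
    have hnpos : 0 < 2 ^ kk := pow_pos (by norm_num : (0 : ℕ) < 2) kk
    obtain ⟨m, hm⟩ : ∃ m, 2 ^ kk = m + 1 := ⟨2 ^ kk - 1, (Nat.succ_pred_eq_of_pos hnpos).symm⟩
    have h1 : ‖(S * star S) ^ 2 ^ kk‖ = (‖S‖ * ‖S‖) ^ 2 ^ kk := by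
      rw [cs_norm_pow_two_pow _ hBsa kk, hBnorm]
    rw [← h1, hm]
    calc ‖(S * star S) ^ (m + 1)‖ ≤ Real.sqrt (a 0) * (((N : ℝ) * A) * (A * A) ^ m) := hpow m
      _ ≤ A * (((N : ℝ) * A) * (A * A) ^ m) := by
          refine mul_le_mul_of_nonneg_right hsqa0 ?_
          positivity
      _ = (N : ℝ) * (A * A) ^ (m + 1) := by ring
  by_contra hcon
  push_neg at hcon
  rcases hA0.eq_or_lt with hAz | hApos
  · have hTz : ∀ k, T k = 0 := by
      intro k
      have hle : ‖T k‖ ≤ 0 := (hT k).trans (hsqa0.trans hAz.symm.le)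
      exact norm_le_zero_iff.mp hle
    have hS0 : S = 0 := by
      rw [hS]
      exact Finset.sum_eq_zero fun k _ => hTz k
    rw [hS0, norm_zero] at hcon
    linarith
  · have hAA : 0 < A * A := mul_pos hApos hApos
    have hr2 : 1 < (‖S‖ * ‖S‖) / (A * A) := by
      rw [lt_div_iff₀ hAA, one_mul]
      exact mul_self_lt_mul_self hA0 hcon
    obtain ⟨n, hn⟩ := pow_unbounded_of_one_lt (N : ℝ) hr2
    have hle : ((‖S‖ * ‖S‖) / (A * A)) ^ 2 ^ n ≤ (N : ℝ) := by
      rw [div_pow, div_le_iff₀ (pow_pos hAA _)]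
      exact key n
    have h2 : ((‖S‖ * ‖S‖) / (A * A)) ^ n ≤ ((‖S‖ * ‖S‖) / (A * A)) ^ 2 ^ n :=
      pow_le_pow_right₀ hr2.le (Nat.lt_two_pow_self (n := n)).le
    linarith
end
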